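/- Let G be a factorizable finite simple graph, M a perfect matching of G, G1 a factor-component of G, and X ⊆ V(G) a critical-inducing set for G1. Suppose there exists an M-ear P relative to X, and let I1, …, Is (s ≥ 1) be the factor-components of G that contain internal vertices of P. Then X ∪ V(I1) ∪ ⋯ ∪ V(Is) is also a critical-inducing set for G1. -/

import Mathlib

open SimpleGraph

variable {V : Type*}

/-- A set of edges is pairwise vertex-disjoint. -/
def DisjointEdges (N : Set (Sym2 V)) : Prop :=
  ∀ e ∈ N, ∀ f ∈ N, e ≠ f → ∀ x : V, x ∈ e → x ∉ f

/-- `M` is a matching of `G`: a set of pairwise vertex-disjoint edges of `G`. -/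
def IsMatchingSet (G : SimpleGraph V) (M : Set (Sym2 V)) : Prop :=
  M ⊆ G.edgeSet ∧ DisjointEdges M

/-- `M` is a perfect matching of `G`: a matching covering every vertex. -/
def IsPerfectMatchingSet (G : SimpleGraph V) (M : Set (Sym2 V)) : Prop :=
  IsMatchingSet G M ∧ ∀ v : V, ∃ e ∈ M, v ∈ e

/-- `M` is a near-perfect matching of `G` whose unique exposed vertex is `v`. -/
def IsNearPerfectMatchingSet (G : SimpleGraph V) (M : Set (Sym2 V)) (v : V) : Prop :=
  IsMatchingSet G M ∧ (∀ e ∈ M, v ∉ e) ∧ ∀ u : V, u ≠ v → ∃ e ∈ M, u ∈ e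

/-- The induced subgraph `G[X]` has a perfect matching. -/
def HasPMOn (G : SimpleGraph V) (X : Set V) : Prop :=
  ∃ M : Set (Sym2 V), IsMatchingSet G M ∧ (∀ e ∈ M, ∀ x : V, x ∈ e → x ∈ X) ∧
    ∀ v ∈ X, ∃ e ∈ M, v ∈ e

/-- `G` is factorizable: it has a perfect matching. -/
def Factorizable (G : SimpleGraph V) : Prop :=
  ∃ M : Set (Sym2 V), IsPerfectMatchingSet G M

/-- `G` is factor-critical: deleting any single vertex leaves a factorizable graph. -/
def FactorCritical (G : SimpleGraph V) : Prop :=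
  ∀ v : V, HasPMOn G {v}ᶜ

/-- A walk is `M`-alternating: its edges outside `M` are pairwise vertex-disjoint. -/
def MAlternating (M : Set (Sym2 V)) {G : SimpleGraph V} {u v : V} (p : G.Walk u v) : Prop :=
  ∀ e ∈ p.edges, ∀ f ∈ p.edges, e ∉ M → f ∉ M → e ≠ f → ∀ x : V, x ∈ e → x ∉ f

/-- An `M`-saturated path: a path with an odd number of edges such that `M ∩ E(P)`
is a perfect matching of `P`. -/
def IsSaturatedPath (M : Set (Sym2 V)) {G : SimpleGraph V} {u v : V} (p : G.Walk u v) : Prop :=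
  p.IsPath ∧ Odd p.length ∧ ∀ x ∈ p.support, ∃ e ∈ p.edges, e ∈ M ∧ x ∈ e

/-- An `M`-exposed path: a path with an odd number of edges such that `E(P) \ M`
is a perfect matching of `P`. -/
def IsExposedPath (M : Set (Sym2 V)) {G : SimpleGraph V} {u v : V} (p : G.Walk u v) : Prop :=
  p.IsPath ∧ Odd p.length ∧ ∀ x ∈ p.support, ∃ e ∈ p.edges, e ∉ M ∧ x ∈ e

/-- An `M`-balanced path from `u` to `v`: an `M`-alternating path with an even number
of edges whose first edge (the one incident with `u`) belongs to `M`; a trivial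
one-vertex path is `M`-balanced. -/
def IsBalancedPath (M : Set (Sym2 V)) {G : SimpleGraph V} {u v : V} (p : G.Walk u v) : Prop :=
  p.IsPath ∧ Even p.length ∧ MAlternating M p ∧ ∀ e ∈ p.edges.head?, e ∈ M

/-- An edge of `G` is allowed if it lies in some perfect matching of `G`. -/
def Allowed (G : SimpleGraph V) (e : Sym2 V) : Prop :=
  ∃ M : Set (Sym2 V), IsPerfectMatchingSet G M ∧ e ∈ M

/-- The spanning subgraph of `G` formed by its allowed edges. -/
def allowedSubgraph (G : SimpleGraph V) : SimpleGraph V where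
  Adj u v := G.Adj u v ∧ Allowed G s(u, v)
  symm := by
    constructor
    intro u v h
    refine ⟨h.1.symm, ?_⟩
    rw [Sym2.eq_swap]
    exact h.2
  loopless := ⟨fun v h => G.irrefl (v := v) h.1⟩

/-- `C` is (the vertex set of) a factor-component of `G`: a connected component of the
spanning subgraph of `G` formed by the allowed edges (the factor-component itself being
the induced subgraph `G[C]`). -/
def IsFactorComponent (G : SimpleGraph V) (C : Set V) : Prop :=
  ∃ c : (allowedSubgraph G).ConnectedComponent, C = c.supp

/-- `G` is elementary: it is factorizable and has exactly one factor-component. -/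
def Elementary (G : SimpleGraph V) : Prop :=
  Factorizable G ∧ (allowedSubgraph G).Connected

/-- `X` is a separating set of `G`. -/
def Separating (G : SimpleGraph V) (X : Set V) : Prop :=
  ∀ C : Set V, IsFactorComponent G C → C ⊆ X ∨ Disjoint C X

/-- The contraction `G[X]/S`: the induced subgraph of `G` on `X` with `S` contracted
to a single vertex (the vertex `none`), deleting loops and parallel edges. -/
def contractOn (G : SimpleGraph V) (X S : Set V) : SimpleGraph (Option ↥(X \ S)) where
  Adj a b :=
    match a, b with
    | some x, some y => G.Adj x.1 y.1
    | some x, none => ∃ s ∈ S, G.Adj x.1 s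
    | none, some y => ∃ s ∈ S, G.Adj y.1 s
    | none, none => False
  symm := by
    constructor
    rintro (_ | x) (_ | y) h
    · exact h.elim
    · exact h
    · exact h
    · exact h.symm
  loopless := by
    constructor
    rintro (_ | x) h
    · exact h.elim
    · exact G.irrefl (v := x.1) h

/-- `X` is a critical-inducing set for the factor-component (with vertex set) `C1`:
a separating set containing `C1` such that `G[X]/C1` is factor-critical. -/
def CriticalInducing (G : SimpleGraph V) (C1 X : Set V) : Prop :=
  Separating G X ∧ C1 ⊆ X ∧ FactorCritical (contractOn G X C1)

/-- `C1 ⊵ C2`: there is a critical-inducing set for `C1` to `C2`. -/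
def Yield (G : SimpleGraph V) (C1 C2 : Set V) : Prop :=
  ∃ X : Set V, CriticalInducing G C1 X ∧ C2 ⊆ X

/-- `u ∼ v`: `u = v` or `G - u - v` has no perfect matching. -/
def SimRel (G : SimpleGraph V) (u v : V) : Prop :=
  u = v ∨ ¬ HasPMOn G (({u, v} : Set V)ᶜ)

/-- An `M`-ear relative to the vertex set `X`: a path whose two end vertices lie in `X`
and whose internal vertices do not (or a cycle with exactly one vertex in `X`), such
that the ear minus `X` is an `M`-saturated path. -/
def IsMEar (G : SimpleGraph V) (M : Set (Sym2 V)) (X : Set V) {u v : V}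
    (p : G.Walk u v) : Prop :=
  u ∈ X ∧ v ∈ X ∧ ((∃ h : u = v, (p.copy rfl h.symm).IsCycle) ∨ (u ≠ v ∧ p.IsPath)) ∧
  ∃ (x y : V) (hux : G.Adj u x) (q : G.Walk x y) (hyv : G.Adj y v),
    p = SimpleGraph.Walk.cons hux (q.concat hyv) ∧
    IsSaturatedPath M q ∧ ∀ w ∈ q.support, w ∉ X

/-- An `M`-ear relative to `X` through (the factor-component with vertex set) `C`:
some internal vertex of the ear lies in `C`. -/
def IsMEarThrough (G : SimpleGraph V) (M : Set (Sym2 V)) (X C : Set V) {u v : V}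
    (p : G.Walk u v) : Prop :=
  IsMEar G M X p ∧ ∃ w ∈ p.support, w ∉ X ∧ w ∈ C

/-- An `M`-ear sequence `(H 0, …, H k)` of pairwise distinct factor-components,
where for each `i` there is an `M`-ear relative to `H i` through `H (i+1)`. -/
def IsMEarSequence (G : SimpleGraph V) (M : Set (Sym2 V)) (k : ℕ)
    (H : Fin (k + 1) → Set V) : Prop :=
  (∀ i, IsFactorComponent G (H i)) ∧ Function.Injective H ∧
  ∀ i : Fin k, ∃ (u v : V) (p : G.Walk u v),
    IsMEarThrough G M (H i.castSucc) (H i.succ) p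


namespace S9
open SimpleGraph Walk List

variable {V : Type*}

/-- all endpoints of edges of `N` lie in `S`. -/
def Within (S : Set V) (N : Set (Sym2 V)) : Prop := ∀ e ∈ N, ∀ t : V, t ∈ e → t ∈ S

/-- `N` covers exactly `S` (together with `Within S N`). -/
def Covers (S : Set V) (N : Set (Sym2 V)) : Prop := ∀ t ∈ S, ∃ e ∈ N, t ∈ e

lemma match_unique {N : Set (Sym2 V)} (hN : DisjointEdges N) {e f : Sym2 V}
    (he : e ∈ N) (hf : f ∈ N) {t : V} (hte : t ∈ e) (htf : t ∈ f) : e = f := by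
  by_contra hne
  exact hN e he f hf hne t hte htf

lemma perfect_within {G : SimpleGraph V} {M : Set (Sym2 V)} (hM : IsPerfectMatchingSet G M)
    : Within Set.univ M := fun _ _ _ _ => trivial

/-- edge in a matching through `t`, with other endpoint. -/
lemma mem_other {e : Sym2 V} {t : V} (h : t ∈ e) : ∃ s, e = s(t, s) := Sym2.mem_iff_exists.mp h

end S9
namespace S9
variable {V : Type*} {G : SimpleGraph V}

lemma allowed_of_mem_pm {M : Set (Sym2 V)} (hM : IsPerfectMatchingSet G M) {e : Sym2 V}
    (he : e ∈ M) : Allowed G e := ⟨M, hM, he⟩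

lemma adj_allowed_iff {a b : V} :
    (allowedSubgraph G).Adj a b ↔ G.Adj a b ∧ Allowed G s(a, b) := Iff.rfl

lemma allowed_adj {M : Set (Sym2 V)} (hM : IsPerfectMatchingSet G M) {a b : V}
    (hab : s(a, b) ∈ M) : (allowedSubgraph G).Adj a b :=
  adj_allowed_iff.mpr ⟨hM.1.1 hab, allowed_of_mem_pm hM hab⟩

lemma same_comp_of_pm_edge {M : Set (Sym2 V)} (hM : IsPerfectMatchingSet G M) {a b : V}
    (hab : s(a, b) ∈ M) :
    (allowedSubgraph G).connectedComponentMk a = (allowedSubgraph G).connectedComponentMk b :=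
  ConnectedComponent.sound (allowed_adj hM hab).reachable

lemma mem_own_supp (v : V) : v ∈ ((allowedSubgraph G).connectedComponentMk v).supp :=
  (ConnectedComponent.mem_supp_iff _ _).mpr rfl

/-- `S` is closed under `M`-edges. -/
def MClosed (M : Set (Sym2 V)) (S : Set V) : Prop :=
  ∀ e ∈ M, ∀ t : V, t ∈ e → t ∈ S → ∀ t' : V, t' ∈ e → t' ∈ S

/-- restriction of an edge set to edges within `S`. -/
def restr (S : Set V) (M : Set (Sym2 V)) : Set (Sym2 V) :=
  {e | e ∈ M ∧ ∀ t : V, t ∈ e → t ∈ S}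

lemma restr_subset (S : Set V) (M : Set (Sym2 V)) : restr S M ⊆ M := fun _ h => h.1

lemma restr_within (S : Set V) (M : Set (Sym2 V)) : Within S (restr S M) := fun _ h => h.2

lemma restr_mset {M : Set (Sym2 V)} (hM : IsMatchingSet G M) (S : Set V) :
    IsMatchingSet G (restr S M) :=
  ⟨fun _ h => hM.1 h.1, fun e he f hf hne => hM.2 e he.1 f hf.1 hne⟩

lemma restr_covers {M : Set (Sym2 V)} (hM : IsPerfectMatchingSet G M) {S : Set V}
    (hS : MClosed M S) : Covers S (restr S M) := by
  intro t ht
  obtain ⟨e, heM, hte⟩ := hM.2 t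
  exact ⟨e, ⟨heM, fun t' ht' => hS e heM t hte ht t' ht'⟩, hte⟩

/-- a component's support is closed under edges of any perfect matching. -/
lemma supp_mclosed {M : Set (Sym2 V)} (hM : IsPerfectMatchingSet G M)
    (c : (allowedSubgraph G).ConnectedComponent) : MClosed M c.supp := by
  intro e heM t hte htS t' ht'
  obtain ⟨s, rfl⟩ := mem_other hte
  rw [ConnectedComponent.mem_supp_iff] at htS ⊢
  rcases Sym2.mem_iff.mp ht' with rfl | rfl
  · exact htS
  · rw [← same_comp_of_pm_edge hM heM]; exact htS

lemma sUnion_supp_mclosed {M : Set (Sym2 V)} (hM : IsPerfectMatchingSet G M)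
    {𝒞 : Set (Set V)} (h𝒞 : ∀ C ∈ 𝒞, IsFactorComponent G C) : MClosed M (⋃₀ 𝒞) := by
  intro e heM t hte htS t' ht'
  obtain ⟨C, hC, htC⟩ := htS
  obtain ⟨c, rfl⟩ := h𝒞 C hC
  exact ⟨c.supp, hC, supp_mclosed hM c e heM t hte htC t' ht'⟩

lemma supp_eq_or_disjoint (c c' : (allowedSubgraph G).ConnectedComponent) :
    c = c' ∨ Disjoint c.supp c'.supp := by
  by_cases h : c = c'
  · exact Or.inl h
  · refine Or.inr (Set.disjoint_left.mpr fun t ht ht' => h ?_)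
    rw [ConnectedComponent.mem_supp_iff] at ht ht'
    rw [← ht, ← ht']

end S9
namespace S9
open SimpleGraph Walk List
variable {V : Type*} {G : SimpleGraph V}

lemma edges_ne_nil_of_ne {a b : V} (W : G.Walk a b) (h : a ≠ b) : W.edges ≠ [] := by
  intro he
  exact h (Walk.eq_of_length_eq_zero (by simpa [← Walk.length_edges] using congrArg List.length he))

/-- The deterministic alternating path between a matching `A` exposing exactly `{a,b}`
in `S` and a matching `B` covering `S`. -/
lemma build_alt [Fintype V] {S : Set V} {B : Set (Sym2 V)} (hB : IsMatchingSet G B)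
    (hBw : Within S B) (hBc : Covers S B) {b : V} (hbS : b ∈ S) :
    ∀ n (A : Set (Sym2 V)) (a : V), (A \ B).ncard = n →
    IsMatchingSet G A → a ≠ b → a ∈ S →
    (∀ e ∈ A, ∀ t : V, t ∈ e → t ∈ S ∧ t ≠ a ∧ t ≠ b) →
    (∀ t ∈ S, t ≠ a → t ≠ b → ∃ e ∈ A, t ∈ e) →
    ∃ W : G.Walk a b, W.IsPath ∧ (∀ t ∈ W.support, t ∈ S) ∧
      List.IsChain (fun e f => e ∈ B ↔ f ∉ B) W.edges ∧
      (∀ e ∈ W.edges.head?, e ∈ B \ A) ∧ (∀ e ∈ W.edges.getLast?, e ∈ B \ A) ∧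
      (∀ e ∈ W.edges, e ∈ (B \ A) ∪ (A \ B)) ∧
      (∀ t ∈ W.support, ∃ e ∈ W.edges, e ∈ B ∧ t ∈ e) := by
  intro n
  induction n using Nat.strong_induction_on with
  | _ n IH =>
    intro A a hcard hA hab haS hAav hAcov
    obtain ⟨e₁, he₁B, hae₁⟩ := hBc a haS
    obtain ⟨a₁, rfl⟩ := mem_other hae₁
    have hne₁ : a ≠ a₁ := fun h => G.not_isDiag_of_mem_edgeSet (hB.1 he₁B) (by rw [← h]; rfl)
    have hadj₁ : G.Adj a a₁ := hB.1 he₁B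
    have ha₁S : a₁ ∈ S := hBw _ he₁B a₁ (Sym2.mem_mk_right a a₁)
    have he₁A : s(a, a₁) ∉ A := fun h => (hAav _ h a (Sym2.mem_mk_left a a₁)).2.1 rfl
    by_cases hc : ∃ f ∈ A, a₁ ∈ f
    · -- continue walking
      obtain ⟨f₁, hf₁A, ha₁f₁⟩ := hc
      obtain ⟨a₂, rfl⟩ := mem_other ha₁f₁
      have hne₂ : a₁ ≠ a₂ := fun h => G.not_isDiag_of_mem_edgeSet (hA.1 hf₁A) (by rw [← h]; rfl)
      have hadj₂ : G.Adj a₁ a₂ := hA.1 hf₁A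
      obtain ⟨ha₂S, ha₂a, ha₂b⟩ := hAav _ hf₁A a₂ (Sym2.mem_mk_right a₁ a₂)
      have ha₁b : a₁ ≠ b := (hAav _ hf₁A a₁ (Sym2.mem_mk_left a₁ a₂)).2.2
      have hef : s(a, a₁) ≠ s(a₁, a₂) := fun h => he₁A (h ▸ hf₁A)
      have hf₁B : s(a₁, a₂) ∉ B := by
        intro hf₁B
        exact hef (match_unique hB.2 he₁B hf₁B (Sym2.mem_mk_right a a₁) (Sym2.mem_mk_left a₁ a₂))
      set A' : Set (Sym2 V) := insert s(a, a₁) (A \ {s(a₁, a₂)}) with hA'def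
      have hsub : ∀ e ∈ A', e ∈ A ∨ e = s(a, a₁) := by
        rintro e (rfl | ⟨h, -⟩)
        · exact Or.inr rfl
        · exact Or.inl h
      have hA'card : (A' \ B).ncard < n := by
        have : A' \ B = (A \ B) \ {s(a₁, a₂)} := by
          ext e
          simp only [hA'def, Set.mem_diff, Set.mem_insert_iff, Set.mem_singleton_iff]
          constructor
          · rintro ⟨rfl | ⟨heA, hne⟩, heB⟩
            · exact absurd he₁B heB
            · exact ⟨⟨heA, heB⟩, hne⟩
          · rintro ⟨⟨heA, heB⟩, hne⟩
            exact ⟨Or.inr ⟨heA, hne⟩, heB⟩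
        rw [this, ← hcard]
        exact Set.ncard_diff_singleton_lt_of_mem ⟨hf₁A, hf₁B⟩ (Set.toFinite _)
      have hA' : IsMatchingSet G A' := by
        constructor
        · rintro e (rfl | ⟨h, -⟩)
          · exact hB.1 he₁B
          · exact hA.1 h
        · rintro e he f hf hne t hte htf
          rcases hsub e he with heA | rfl
          · rcases hsub f hf with hfA | rfl
            · rcases he with rfl | _
              · exact absurd heA he₁A
              · rcases hf with rfl | hf'
                · exact absurd hfA he₁A
                · exact hA.2 e heA f hfA hne t hte htf
            · -- f = s(a,a₁), e ∈ A
              have hav := hAav e heA t hte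
              rcases Sym2.mem_iff.mp htf with h | h
              · exact hav.2.1 h
              · -- t = a₁ : e is an A-edge at a₁, so e = f₁, but e ∈ A' means e ≠ f₁
                have he2 : e = s(a₁, a₂) :=
                  match_unique hA.2 heA hf₁A (h ▸ hte) (Sym2.mem_mk_left a₁ a₂)
                rcases he with rfl | ⟨-, hne'⟩
                · exact he₁A heA
                · exact hne' (Set.mem_singleton_iff.mpr he2)
          · -- e = s(a,a₁)
            rcases hsub f hf with hfA | rfl
            · have hav := hAav f hfA t htf
              rcases Sym2.mem_iff.mp hte with h | h
              · exact hav.2.1 h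
              · have hf2 : f = s(a₁, a₂) :=
                  match_unique hA.2 hfA hf₁A (h ▸ htf) (Sym2.mem_mk_left a₁ a₂)
                rcases hf with rfl | ⟨-, hne'⟩
                · exact he₁A hfA
                · exact hne' (Set.mem_singleton_iff.mpr hf2)
            · exact hne rfl
      have hA'av : ∀ e ∈ A', ∀ t : V, t ∈ e → t ∈ S ∧ t ≠ a₂ ∧ t ≠ b := by
        rintro e (rfl | ⟨heA, hne⟩) t hte
        · rcases Sym2.mem_iff.mp hte with h | h
          · rw [h]; exact ⟨haS, fun hh => ha₂a hh.symm, hab⟩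
          · rw [h]; exact ⟨ha₁S, hne₂, ha₁b⟩
        · obtain ⟨htS, -, htb⟩ := hAav e heA t hte
          refine ⟨htS, fun h => ?_, htb⟩
          exact hne (Set.mem_singleton_iff.mpr
            (match_unique hA.2 heA hf₁A hte (h ▸ Sym2.mem_mk_right a₁ a₂)))
      have hA'cov : ∀ t ∈ S, t ≠ a₂ → t ≠ b → ∃ e ∈ A', t ∈ e := by
        intro t htS hta₂ htb
        by_cases h1 : t = a
        · exact ⟨s(a, a₁), Set.mem_insert _ _, h1 ▸ Sym2.mem_mk_left a a₁⟩
        by_cases h2 : t = a₁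
        · exact ⟨s(a, a₁), Set.mem_insert _ _, h2 ▸ Sym2.mem_mk_right a a₁⟩
        obtain ⟨g, hgA, htg⟩ := hAcov t htS h1 htb
        have hgf : g ≠ s(a₁, a₂) := by
          intro h; subst h
          rcases Sym2.mem_iff.mp htg with rfl | rfl
          · exact h2 rfl
          · exact hta₂ rfl
        exact ⟨g, Set.mem_insert_of_mem _ ⟨hgA, hgf⟩, htg⟩
      obtain ⟨W', hWp, hWS, hWch, hWh, hWl, hWcl, hWsat⟩ :=
        IH _ hA'card A' a₂ rfl hA' ha₂b ha₂S hA'av hA'cov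
      -- a and a₁ are not on W'
      have hBe_a : ∀ e ∈ B, a ∈ e → e = s(a, a₁) := fun e he hae =>
        match_unique hB.2 he he₁B hae (Sym2.mem_mk_left a a₁)
      have hBe_a₁ : ∀ e ∈ B, a₁ ∈ e → e = s(a, a₁) := fun e he hae =>
        match_unique hB.2 he he₁B hae (Sym2.mem_mk_right a a₁)
      have he₁cl : s(a, a₁) ∉ (B \ A') ∪ (A' \ B) := by
        rintro (⟨-, h⟩ | ⟨-, h⟩)
        · exact h (Set.mem_insert _ _)
        · exact h he₁B
      have haW' : a ∉ W'.support := by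
        intro h
        obtain ⟨e, heW, heB, hae⟩ := hWsat a h
        exact he₁cl (hBe_a e heB hae ▸ hWcl e heW)
      have ha₁W' : a₁ ∉ W'.support := by
        intro h
        obtain ⟨e, heW, heB, hae⟩ := hWsat a₁ h
        exact he₁cl (hBe_a₁ e heB hae ▸ hWcl e heW)
      refine ⟨Walk.cons hadj₁ (Walk.cons hadj₂ W'), ?_, ?_, ?_, ?_, ?_, ?_, ?_⟩
      · rw [Walk.cons_isPath_iff, Walk.cons_isPath_iff, Walk.support_cons]
        refine ⟨⟨hWp, ha₁W'⟩, ?_⟩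
        simp only [List.mem_cons, not_or]
        exact ⟨hne₁, haW'⟩
      · intro t ht
        rw [Walk.support_cons, Walk.support_cons] at ht
        simp only [List.mem_cons] at ht
        rcases ht with rfl | rfl | ht
        · exact haS
        · exact ha₁S
        · exact hWS t ht
      · rw [Walk.edges_cons, Walk.edges_cons]
        rw [List.isChain_cons]
        constructor
        · intro f hf
          rw [List.head?_cons, Option.mem_some_iff] at hf
          rw [← hf]
          exact iff_of_true he₁B hf₁B
        rw [List.isChain_cons]
        refine ⟨fun g hg => ?_, hWch⟩
        exact iff_of_false hf₁B (not_not_intro (hWh g hg).1)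
      · rw [Walk.edges_cons]
        intro e he
        rw [List.head?_cons, Option.mem_some_iff] at he
        subst he
        exact ⟨he₁B, he₁A⟩
      · rw [Walk.edges_cons, Walk.edges_cons]
        have hWne : W'.edges ≠ [] := edges_ne_nil_of_ne W' ha₂b
        obtain ⟨g, l, hgl⟩ := List.exists_cons_of_ne_nil hWne
        rw [hgl] at hWl ⊢
        rw [List.getLast?_cons_cons, List.getLast?_cons_cons]
        intro e he
        obtain ⟨heB, heA'⟩ := hWl e he
        refine ⟨heB, fun heA => ?_⟩
        by_cases h : e = s(a₁, a₂)
        · exact hf₁B (h ▸ heB)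
        · exact heA' (Set.mem_insert_of_mem _ ⟨heA, h⟩)
      · rw [Walk.edges_cons, Walk.edges_cons]
        intro e he
        simp only [List.mem_cons] at he
        rcases he with rfl | rfl | he
        · exact Or.inl ⟨he₁B, he₁A⟩
        · exact Or.inr ⟨hf₁A, hf₁B⟩
        · rcases hWcl e he with ⟨heB, heA'⟩ | ⟨heA', heB⟩
          · refine Or.inl ⟨heB, fun heA => ?_⟩
            by_cases h : e = s(a₁, a₂)
            · exact hf₁B (h ▸ heB)
            · exact heA' (Set.mem_insert_of_mem _ ⟨heA, h⟩)
          · rcases hsub e heA' with heA | rfl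
            · exact Or.inr ⟨heA, heB⟩
            · exact absurd he₁B heB
      · intro t ht
        rw [Walk.support_cons, Walk.support_cons] at ht
        rw [Walk.edges_cons, Walk.edges_cons]
        simp only [List.mem_cons] at ht
        rcases ht with rfl | rfl | ht
        · exact ⟨s(t, a₁), List.mem_cons_self, he₁B, Sym2.mem_mk_left _ _⟩
        · exact ⟨s(a, t), List.mem_cons_self, he₁B, Sym2.mem_mk_right _ _⟩
        · obtain ⟨e, heW, heB, hte⟩ := hWsat t ht
          exact ⟨e, List.mem_cons_of_mem _ (List.mem_cons_of_mem _ heW), heB, hte⟩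
    · -- terminal step : a₁ must be b
      have ha₁b : a₁ = b := by
        by_contra h
        exact hc (hAcov a₁ ha₁S (Ne.symm hne₁) h)
      subst ha₁b
      refine ⟨Walk.cons hadj₁ Walk.nil, ?_, ?_, ?_, ?_, ?_, ?_, ?_⟩
      · simp [Walk.cons_isPath_iff, hne₁]
      · intro t ht
        simp only [Walk.support_cons, Walk.support_nil, List.mem_cons,
          List.not_mem_nil, or_false] at ht
        rcases ht with rfl | rfl
        · exact haS
        · exact ha₁S
      · simp [Walk.edges_cons]
      · simp only [Walk.edges_cons, Walk.edges_nil, List.head?_cons, Option.mem_some_iff]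
        rintro e rfl
        exact ⟨he₁B, he₁A⟩
      · simp only [Walk.edges_cons, Walk.edges_nil]
        intro e he
        rw [List.getLast?_singleton, Option.mem_some_iff] at he
        rw [← he]
        exact ⟨he₁B, he₁A⟩
      · simp only [Walk.edges_cons, Walk.edges_nil, List.mem_singleton]
        rintro e rfl
        exact Or.inl ⟨he₁B, he₁A⟩
      · intro t ht
        simp only [Walk.support_cons, Walk.support_nil, List.mem_cons,
          List.not_mem_nil, or_false] at ht
        refine ⟨s(a, a₁), by simp [Walk.edges_cons], he₁B, ?_⟩
        rcases ht with rfl | rfl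
        · exact Sym2.mem_mk_left _ _
        · exact Sym2.mem_mk_right _ _

end S9
namespace S9
open SimpleGraph Walk List
variable {V : Type*} {G : SimpleGraph V}

lemma first_edge {a b : V} {W : G.Walk a b} (hp : W.IsPath) {e : Sym2 V}
    (he : e ∈ W.edges) (hae : a ∈ e) :
    ∃ (c : V) (h : G.Adj a c) (W₂ : G.Walk c b), W = Walk.cons h W₂ ∧ e = s(a, c) := by
  cases W with
  | nil => simp [Walk.edges_nil] at he
  | cons h W₂ =>
    rw [Walk.edges_cons, List.mem_cons] at he
    rcases he with rfl | he
    · exact ⟨_, h, W₂, rfl, rfl⟩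
    · exfalso
      obtain ⟨c, rfl⟩ := mem_other hae
      exact ((Walk.cons_isPath_iff _ _).mp hp).2 (W₂.fst_mem_support_of_mem_edges he)

lemma chain'_transfer {α : Type*} {P Q : α → Prop} :
    ∀ {l : List α}, (∀ e ∈ l, P e ↔ Q e) →
      List.IsChain (fun e f => P e ↔ ¬ P f) l → List.IsChain (fun e f => Q e ↔ ¬ Q f) l := by
  intro l
  induction l with
  | nil => intro _ _; simp
  | cons x l ih =>
    intro hm hc
    rw [List.isChain_cons] at hc ⊢
    refine ⟨fun y hy => ?_, ih (fun e he => hm e (List.mem_cons_of_mem _ he)) hc.2⟩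
    have h1 := hc.1 y hy
    have hx := hm x (List.mem_cons_self)
    have hy' := hm y (List.mem_cons_of_mem _ (List.mem_of_mem_head? hy))
    tauto

/-- For an allowed edge `m–w` there is an `M`-alternating path from `m` to `w` beginning
and ending with `M`-edges, lying in the factor-component of `m`. -/
lemma exchange_path [Fintype V] {M : Set (Sym2 V)} (hM : IsPerfectMatchingSet G M) {m w : V}
    (hadj : (allowedSubgraph G).Adj m w) :
    ∃ P : G.Walk m w, P.IsPath ∧
      (∀ t ∈ P.support, (allowedSubgraph G).connectedComponentMk t
          = (allowedSubgraph G).connectedComponentMk m) ∧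
      List.IsChain (fun e f => e ∈ M ↔ f ∉ M) P.edges ∧
      (∀ e ∈ P.edges.head?, e ∈ M) ∧ (∀ e ∈ P.edges.getLast?, e ∈ M) ∧
      (∀ t ∈ P.support, ∃ e ∈ P.edges, e ∈ M ∧ t ∈ e) := by
  have hcw : (allowedSubgraph G).connectedComponentMk w
      = (allowedSubgraph G).connectedComponentMk m :=
    ConnectedComponent.sound hadj.symm.reachable
  by_cases hmem : s(m, w) ∈ M
  · refine ⟨Walk.cons (adj_allowed_iff.mp hadj).1 Walk.nil, by simp [Walk.cons_isPath_iff, (adj_allowed_iff.mp hadj).1.ne], ?_, ?_, ?_, ?_, ?_⟩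
    · intro t ht
      simp only [Walk.support_cons, Walk.support_nil, List.mem_cons, List.not_mem_nil,
        or_false] at ht
      rcases ht with rfl | rfl
      · rfl
      · exact hcw
    · simp [Walk.edges_cons]
    · simp only [Walk.edges_cons, Walk.edges_nil, List.head?_cons, Option.mem_some_iff]
      rintro e rfl; exact hmem
    · simp only [Walk.edges_cons, Walk.edges_nil]
      intro e he
      rw [List.getLast?_singleton, Option.mem_some_iff] at he
      rw [← he]; exact hmem
    · intro t ht
      simp only [Walk.support_cons, Walk.support_nil, List.mem_cons, List.not_mem_nil,
        or_false] at ht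
      refine ⟨s(m, w), by simp [Walk.edges_cons], hmem, ?_⟩
      rcases ht with rfl | rfl
      · exact Sym2.mem_mk_left _ _
      · exact Sym2.mem_mk_right _ _
  · obtain ⟨M₀, hM₀, he₀⟩ := (adj_allowed_iff.mp hadj).2
    set c := (allowedSubgraph G).connectedComponentMk m with hc
    set S := c.supp with hS
    have hmS : m ∈ S := mem_own_supp m
    have hwS : w ∈ S := (ConnectedComponent.mem_supp_iff _ _).mpr hcw
    set B := restr S M with hB
    have hBm : IsMatchingSet G B := restr_mset hM.1 S
    have hBw : Within S B := restr_within S M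
    have hBc : Covers S B := restr_covers hM (supp_mclosed hM c)
    set A := restr S M₀ \ {s(m, w)} with hA
    have hAm : IsMatchingSet G A :=
      ⟨fun e he => hM₀.1.1 he.1.1, fun e he f hf hne => hM₀.1.2 e he.1.1 f hf.1.1 hne⟩
    have hAav : ∀ e ∈ A, ∀ t : V, t ∈ e → t ∈ S ∧ t ≠ m ∧ t ≠ w := by
      rintro e ⟨heR, hene⟩ t hte
      refine ⟨heR.2 t hte, fun h => ?_, fun h => ?_⟩
      · exact hene (Set.mem_singleton_iff.mpr
          (match_unique hM₀.1.2 heR.1 he₀ (h ▸ hte) (Sym2.mem_mk_left m w)))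
      · exact hene (Set.mem_singleton_iff.mpr
          (match_unique hM₀.1.2 heR.1 he₀ (h ▸ hte) (Sym2.mem_mk_right m w)))
    have hAcov : ∀ t ∈ S, t ≠ m → t ≠ w → ∃ e ∈ A, t ∈ e := by
      intro t htS htm htw
      obtain ⟨e, heR, hte⟩ := restr_covers hM₀ (supp_mclosed hM₀ c) t htS
      refine ⟨e, ⟨heR, fun h => ?_⟩, hte⟩
      rw [Set.mem_singleton_iff] at h
      subst h
      rcases Sym2.mem_iff.mp hte with rfl | rfl
      · exact htm rfl
      · exact htw rfl
    obtain ⟨W, hWp, hWS, hWch, hWh, hWl, hWcl, hWsat⟩ :=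
      build_alt hBm hBw hBc hwS _ A m rfl hAm hadj.ne hmS hAav hAcov
    have hiff : ∀ e ∈ W.edges, (e ∈ B ↔ e ∈ M) := by
      intro e he
      refine ⟨fun h => h.1, fun h => ⟨h, ?_⟩⟩
      induction e using Sym2.ind with
      | _ p q =>
        intro t ht
        rcases Sym2.mem_iff.mp ht with rfl | rfl
        · exact hWS t (W.fst_mem_support_of_mem_edges he)
        · exact hWS t (W.snd_mem_support_of_mem_edges he)
    refine ⟨W, hWp, ?_, ?_, ?_, ?_, ?_⟩
    · intro t ht
      exact (ConnectedComponent.mem_supp_iff _ _).mp (hWS t ht)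
    · exact chain'_transfer hiff hWch
    · intro e he
      exact ((hiff e (List.mem_of_mem_head? he)).mp (hWh e he).1)
    · intro e he
      have hmm : e ∈ W.edges := List.mem_of_mem_getLast? he
      exact ((hiff e hmm).mp (hWl e he).1)
    · intro t ht
      obtain ⟨e, heW, heB, hte⟩ := hWsat t ht
      exact ⟨e, heW, (hiff e heW).mp heB, hte⟩

end S9
namespace S9
open SimpleGraph Walk List
variable {V : Type*} {G : SimpleGraph V}

/-- Splicing: from a vertex `t` on an alternating path `P : m ⇝ v` (that starts and ends
with `M`-edges), there is an alternating path from `t` to `v` starting with the `M`-edge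
of `t`, using only vertices of `P` (and the non-matching edge `m–v`). -/
lemma splice_seg {M : Set (Sym2 V)} (hMd : DisjointEdges M) {m v : V}
    (P : G.Walk m v) (hPp : P.IsPath)
    (hPch : List.IsChain (fun e f => e ∈ M ↔ f ∉ M) P.edges)
    (hPh : ∀ e ∈ P.edges.head?, e ∈ M)
    (hPsat : ∀ x ∈ P.support, ∃ e ∈ P.edges, e ∈ M ∧ x ∈ e)
    (hmv : G.Adj m v) (hmvM : s(m, v) ∉ M) {t : V} (htP : t ∈ P.support) :
    ∃ R : G.Walk t v, R.IsPath ∧ (∀ x ∈ R.support, x ∈ P.support) ∧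
      List.IsChain (fun e f => e ∈ M ↔ f ∉ M) R.edges ∧
      (∀ e ∈ R.edges.head?, e ∈ M) := by
  classical
  by_cases htv : t = v
  · refine ⟨Walk.nil.copy rfl htv, ?_, ?_, ?_, ?_⟩
    · simp [Walk.isPath_copy]
    · intro x hx
      simp only [Walk.support_copy, Walk.support_nil, List.mem_singleton] at hx
      subst hx; exact htP
    · simp
    · simp
  · obtain ⟨et, hetP, hetM, htet⟩ := hPsat t htP
    have hspec := P.take_spec htP
    have hedges : (P.takeUntil t htP).edges ++ (P.dropUntil t htP).edges = P.edges := by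
      rw [← Walk.edges_append, hspec]
    by_cases hcase : et ∈ (P.dropUntil t htP).edges
    · obtain ⟨c, h', Dr₂, hDreq, hee⟩ := first_edge (hPp.dropUntil htP) hcase htet
      refine ⟨P.dropUntil t htP, hPp.dropUntil htP, ?_, ?_, ?_⟩
      · intro x hx; exact P.support_dropUntil_subset htP hx
      · rw [← hedges] at hPch
        exact hPch.right_of_append
      · rw [hDreq, Walk.edges_cons]
        intro e he
        rw [List.head?_cons, Option.mem_some_iff] at he
        rw [← he, ← hee]
        exact hetM
    · -- et is in the take part; go backwards through m and use the edge m–v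
      have hetT : et ∈ (P.takeUntil t htP).edges := by
        have hmm : et ∈ (P.takeUntil t htP).edges ++ (P.dropUntil t htP).edges := by
          rw [hedges]; exact hetP
        rcases List.mem_append.mp hmm with h | h
        · exact h
        · exact absurd h hcase
      set T := P.takeUntil t htP with hT
      have hTne : T.edges ≠ [] := List.ne_nil_of_mem hetT
      have hTp : T.IsPath := hPp.takeUntil htP
      have hvT : v ∉ T.support := by
        intro hvt
        have hnd := hPp.support_nodup
        rw [← hspec, Walk.support_append] at hnd
        have hvDr : v ∈ (P.dropUntil t htP).support.tail := by
          have hend : v ∈ (P.dropUntil t htP).support := Walk.end_mem_support _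
          rw [Walk.support_eq_cons (P.dropUntil t htP)] at hend
          rcases List.mem_cons.mp hend with h | h
          · exact absurd h.symm htv
          · exact h
        exact (List.disjoint_of_nodup_append hnd) hvt hvDr
      -- the last edge of T is et
      have hlastT : T.edges.getLast? = some et := by
        obtain ⟨c, h', T₂, hTeq, hee⟩ := first_edge hTp.reverse
          (by rw [Walk.edges_reverse, List.mem_reverse]; exact hetT) htet
        have h1 : T.reverse.edges = et :: T₂.edges := by rw [hTeq, Walk.edges_cons, hee]
        rw [Walk.edges_reverse] at h1
        rw [← List.head?_reverse, h1, List.head?_cons]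
      have hTch : List.IsChain (fun e f => e ∈ M ↔ f ∉ M) T.edges := by
        rw [← hedges] at hPch
        exact hPch.left_of_append
      have hThead : ∀ e ∈ T.edges.head?, e ∈ M := by
        intro e he
        apply hPh
        rw [← hedges]
        obtain ⟨g, l, hgl⟩ := List.exists_cons_of_ne_nil hTne
        rw [hgl] at he ⊢
        rw [List.head?_cons, Option.mem_some_iff] at he
        rw [List.cons_append, List.head?_cons]
        simp [he]
      have hvm : (s(v, m) : Sym2 V) ∉ M := by
        rw [Sym2.eq_swap]; exact hmvM
      refine ⟨(Walk.cons hmv.symm T).reverse, ?_, ?_, ?_, ?_⟩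
      · apply Walk.IsPath.reverse
        rw [Walk.cons_isPath_iff]
        exact ⟨hTp, hvT⟩
      · intro x hx
        rw [Walk.support_reverse, List.mem_reverse, Walk.support_cons, List.mem_cons] at hx
        rcases hx with rfl | hx
        · exact Walk.end_mem_support P
        · exact P.support_takeUntil_subset htP hx
      · rw [Walk.edges_reverse]
        rw [List.isChain_reverse]
        have h1 : List.IsChain (fun e f => e ∈ M ↔ f ∉ M) (Walk.cons hmv.symm T).edges := by
          rw [Walk.edges_cons, List.isChain_cons]
          refine ⟨fun y hy => ?_, hTch⟩
          exact iff_of_false hvm (not_not_intro (hThead y hy))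
        refine h1.imp (fun e f h => ?_)
        show f ∈ M ↔ e ∉ M
        tauto
      · rw [Walk.edges_reverse, List.head?_reverse]
        rw [Walk.edges_cons]
        obtain ⟨g, l, hgl⟩ := List.exists_cons_of_ne_nil hTne
        rw [hgl, List.getLast?_cons_cons, ← hgl, hlastT]
        intro e he
        rw [Option.mem_some_iff] at he
        rw [← he]; exact hetM

/-- The main splicing induction: an alternating walk `W` from `t` to `m` (with parity
`fl` at its start) can be rerouted into an alternating path from `t` to `v`. -/
lemma splice {M : Set (Sym2 V)} (hMd : DisjointEdges M) {m v : V}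
    (P : G.Walk m v) (hPp : P.IsPath)
    (hPch : List.IsChain (fun e f => e ∈ M ↔ f ∉ M) P.edges)
    (hPh : ∀ e ∈ P.edges.head?, e ∈ M)
    (hPsat : ∀ x ∈ P.support, ∃ e ∈ P.edges, e ∈ M ∧ x ∈ e)
    (hmv : G.Adj m v) (hmvM : s(m, v) ∉ M) :
    ∀ (n : ℕ) {t : V} (W : G.Walk t m) (fl : Prop), W.length = n → W.IsPath →
      List.IsChain (fun e f => e ∈ M ↔ f ∉ M) W.edges →
      (∀ e ∈ W.edges.head?, (e ∈ M ↔ fl)) →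
      (¬ fl → t ∉ P.support) →
      ∃ R : G.Walk t v, R.IsPath ∧ (∀ x ∈ R.support, x ∈ W.support ∨ x ∈ P.support) ∧
        List.IsChain (fun e f => e ∈ M ↔ f ∉ M) R.edges ∧
        (∀ e ∈ R.edges.head?, (e ∈ M ↔ fl)) := by
  intro n
  induction n using Nat.strong_induction_on with
  | _ n IHn =>
    intro t W fl hlen hWp hWch hWh hfl
    by_cases htP : t ∈ P.support
    · have hflag : fl := by
        by_contra hnf
        exact hfl hnf htP
      obtain ⟨R, hRp, hRS, hRch, hRh⟩ := splice_seg hMd P hPp hPch hPh hPsat hmv hmvM htP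
      exact ⟨R, hRp, fun x hx => Or.inr (hRS x hx), hRch,
        fun e he => iff_of_true (hRh e he) hflag⟩
    · cases W with
      | nil => exact absurd (Walk.start_mem_support P) htP
      | cons h W₂ =>
        rename_i s₂
        have hW2p : W₂.IsPath := ((Walk.cons_isPath_iff _ _).mp hWp).1
        have ht'W2 : t ∉ W₂.support := ((Walk.cons_isPath_iff _ _).mp hWp).2
        have hhe : (s(t, s₂) ∈ M ↔ fl) := by
          apply hWh
          rw [Walk.edges_cons, List.head?_cons]
          rfl
        rw [Walk.edges_cons] at hWch
        have hW2ch : List.IsChain (fun e f => e ∈ M ↔ f ∉ M) W₂.edges :=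
          (List.isChain_cons.mp hWch).2
        have hW2h : ∀ e ∈ W₂.edges.head?, (e ∈ M ↔ ¬ fl) := by
          intro e he
          have hj := (List.isChain_cons.mp hWch).1 e he
          tauto
        have hfl2 : ¬ ¬ fl → s₂ ∉ P.support := by
          intro hfalse hs₂P
          have heM : s(t, s₂) ∈ M := hhe.mpr (not_not.mp hfalse)
          obtain ⟨e', he'P, he'M, hs₂e'⟩ := hPsat s₂ hs₂P
          have he'eq : e' = s(t, s₂) :=
            match_unique hMd he'M heM hs₂e' (Sym2.mem_mk_right t s₂)
          subst he'eq
          exact htP (P.fst_mem_support_of_mem_edges he'P)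
        obtain ⟨R₂, hR2p, hR2S, hR2ch, hR2h⟩ :=
          IHn W₂.length (by rw [← hlen, Walk.length_cons]; omega) W₂ (¬ fl) rfl
            hW2p hW2ch hW2h hfl2
        have ht'R2 : t ∉ R₂.support := by
          intro hx
          rcases hR2S t hx with hx | hx
          · exact ht'W2 hx
          · exact htP hx
        refine ⟨Walk.cons h R₂, ?_, ?_, ?_, ?_⟩
        · rw [Walk.cons_isPath_iff]; exact ⟨hR2p, ht'R2⟩
        · intro x hx
          rw [Walk.support_cons, List.mem_cons] at hx
          rcases hx with rfl | hx
          · exact Or.inl (Walk.start_mem_support _)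
          · rcases hR2S x hx with hx | hx
            · exact Or.inl (by rw [Walk.support_cons]; exact List.mem_cons_of_mem _ hx)
            · exact Or.inr hx
        · rw [Walk.edges_cons, List.isChain_cons]
          refine ⟨fun y hy => ?_, hR2ch⟩
          have hy' := hR2h y hy
          tauto
        · rw [Walk.edges_cons]
          intro e he
          rw [List.head?_cons, Option.mem_some_iff] at he
          rw [← he]
          exact hhe

end S9
namespace S9
open SimpleGraph Walk List
variable {V : Type*} {G : SimpleGraph V}

lemma head_edge_start {a b : V} (W : G.Walk a b) {e : Sym2 V}
    (he : e ∈ W.edges.head?) : a ∈ e := by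
  cases W with
  | nil => simp at he
  | cons h W₂ =>
    rw [Walk.edges_cons, List.head?_cons, Option.mem_some_iff] at he
    rw [← he]
    exact Sym2.mem_mk_left _ _

/-- Extending an alternating path `u ⇝ m` across an allowed edge `m–z` to an
alternating path `u ⇝ z`. -/
lemma extend_alt [Fintype V] {M : Set (Sym2 V)} (hM : IsPerfectMatchingSet G M) {u m z : V}
    (hadj : (allowedSubgraph G).Adj m z) (hne : u ≠ z) (W : G.Walk u m)
    (hWp : W.IsPath)
    (hWS : ∀ x ∈ W.support, (allowedSubgraph G).connectedComponentMk x
        = (allowedSubgraph G).connectedComponentMk u)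
    (hWch : List.IsChain (fun e f => e ∈ M ↔ f ∉ M) W.edges)
    (hWh : ∀ e ∈ W.edges.head?, e ∈ M) :
    ∃ R : G.Walk u z, R.IsPath ∧
      (∀ x ∈ R.support, (allowedSubgraph G).connectedComponentMk x
          = (allowedSubgraph G).connectedComponentMk u) ∧
      List.IsChain (fun e f => e ∈ M ↔ f ∉ M) R.edges ∧
      (∀ e ∈ R.edges.head?, e ∈ M) := by
  classical
  have hcm : (allowedSubgraph G).connectedComponentMk m
      = (allowedSubgraph G).connectedComponentMk u := hWS m (Walk.end_mem_support W)
  have hcz : (allowedSubgraph G).connectedComponentMk z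
      = (allowedSubgraph G).connectedComponentMk u := by
    rw [← hcm]
    exact ConnectedComponent.sound hadj.symm.reachable
  by_cases hzW : z ∈ W.support
  · -- truncate W at z
    have hTedges : (W.takeUntil z hzW).edges ++ (W.dropUntil z hzW).edges = W.edges := by
      rw [← Walk.edges_append, W.take_spec hzW]
    refine ⟨W.takeUntil z hzW, hWp.takeUntil hzW, ?_, ?_, ?_⟩
    · intro x hx
      exact hWS x (W.support_takeUntil_subset hzW hx)
    · rw [← hTedges] at hWch
      exact hWch.left_of_append
    · have hTne : (W.takeUntil z hzW).edges ≠ [] :=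
        edges_ne_nil_of_ne (W.takeUntil z hzW) hne
      obtain ⟨g, l, hgl⟩ := List.exists_cons_of_ne_nil hTne
      rw [hgl, List.head?_cons]
      intro e he
      rw [Option.mem_some_iff] at he
      apply hWh
      rw [← hTedges, hgl, List.cons_append, List.head?_cons]
      simp [he]
  · by_cases hem : s(m, z) ∈ M
    · -- simply append the matching edge m–z
      have hzm : (s(z, m) : Sym2 V) ∈ M := by rw [Sym2.eq_swap]; exact hem
      have hadjzm : G.Adj z m := (adj_allowed_iff.mp hadj).1.symm
      refine ⟨(Walk.cons hadjzm W.reverse).reverse, ?_, ?_, ?_, ?_⟩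
      · apply Walk.IsPath.reverse
        rw [Walk.cons_isPath_iff]
        refine ⟨hWp.reverse, ?_⟩
        rw [Walk.support_reverse, List.mem_reverse]
        exact hzW
      · intro x hx
        rw [Walk.support_reverse, List.mem_reverse, Walk.support_cons, List.mem_cons] at hx
        rcases hx with rfl | hx
        · exact hcz
        · rw [Walk.support_reverse, List.mem_reverse] at hx
          exact hWS x hx
      · have hred : (Walk.cons hadjzm W.reverse).reverse.edges
            = W.edges ++ [s(z, m)] := by
          rw [Walk.edges_reverse, Walk.edges_cons, List.reverse_cons, Walk.edges_reverse,
            List.reverse_reverse]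
        rw [hred]
        rw [List.isChain_append]
        refine ⟨hWch, List.isChain_singleton _, ?_⟩
        intro x hx y hy
        rw [List.head?_cons, Option.mem_some_iff] at hy
        rw [← hy]
        have hmx : m ∈ x := by
          apply head_edge_start W.reverse
          rw [Walk.edges_reverse, List.head?_reverse]
          exact hx
        refine iff_of_false (fun hxM => ?_) (not_not_intro hzm)
        have : x = s(m, z) := match_unique hM.1.2 hxM hem hmx (Sym2.mem_mk_left m z)
        subst this
        exact hzW (W.snd_mem_support_of_mem_edges (List.mem_of_mem_getLast? hx))
      · have hred : (Walk.cons hadjzm W.reverse).reverse.edges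
            = W.edges ++ [s(z, m)] := by
          rw [Walk.edges_reverse, Walk.edges_cons, List.reverse_cons, Walk.edges_reverse,
            List.reverse_reverse]
        rw [hred]
        by_cases hWe : W.edges = []
        · rw [hWe]
          simp only [List.nil_append, List.head?_cons, Option.mem_some_iff]
          rintro e rfl
          exact hzm
        · obtain ⟨g, l, hgl⟩ := List.exists_cons_of_ne_nil hWe
          rw [hgl, List.cons_append, List.head?_cons]
          intro e he
          rw [Option.mem_some_iff] at he
          apply hWh
          rw [hgl, List.head?_cons]
          simp [he]
    · -- splice through the exchange path of the allowed edge m–z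
      obtain ⟨P, hPp, hPS, hPch, hPh, hPl, hPsat⟩ := exchange_path hM hadj
      obtain ⟨R, hRp, hRS, hRch, hRh⟩ :=
        splice hM.1.2 P hPp hPch hPh hPsat (adj_allowed_iff.mp hadj).1 hem W.length W True rfl hWp hWch
          (fun e he => iff_of_true (hWh e he) trivial) (fun h => absurd trivial h)
      refine ⟨R, hRp, ?_, hRch, fun e he => (hRh e he).mpr trivial⟩
      intro x hx
      rcases hRS x hx with hx | hx
      · exact hWS x hx
      · rw [hPS x hx, hcm]

/-- Within a factor-component, any two distinct vertices are joined by an alternating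
path starting with the matching edge of its first vertex. -/
lemma lp [Fintype V] {M : Set (Sym2 V)} (hM : IsPerfectMatchingSet G M) :
    ∀ (n : ℕ) {z u : V} (Wa : (allowedSubgraph G).Walk z u), Wa.length = n → u ≠ z →
    ∃ W : G.Walk u z, W.IsPath ∧
      (∀ x ∈ W.support, (allowedSubgraph G).connectedComponentMk x
          = (allowedSubgraph G).connectedComponentMk u) ∧
      List.IsChain (fun e f => e ∈ M ↔ f ∉ M) W.edges ∧
      (∀ e ∈ W.edges.head?, e ∈ M) := by
  intro n
  induction n using Nat.strong_induction_on with
  | _ n IHn =>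
  intro z u Wa hlen hne
  cases Wa with
  | nil => exact absurd rfl hne
  | cons h Wa₂ =>
    rename_i m
    by_cases hum : u = m
    · subst hum
      refine extend_alt hM h.symm hne Walk.nil (by simp) ?_ (by simp) (by simp)
      intro x hx
      simp only [Walk.support_nil, List.mem_singleton] at hx
      subst hx
      rfl
    · obtain ⟨W, hWp, hWS, hWch, hWh⟩ :=
        IHn Wa₂.length (by rw [← hlen, Walk.length_cons]; omega) Wa₂ rfl hum
      exact extend_alt hM h.symm hne W hWp hWS hWch hWh

end S9
namespace S9
open SimpleGraph Walk List
variable {V : Type*} {G : SimpleGraph V}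

/-- `N` is a matching exposing exactly `{z, w}` inside `D`. -/
def Expo (G : SimpleGraph V) (D : Set V) (N : Set (Sym2 V)) (z w : V) : Prop :=
  N ⊆ G.edgeSet ∧ DisjointEdges N ∧ Within (D \ {z, w}) N ∧ Covers (D \ {z, w}) N ∧ z ≠ w

/-- Structure of a saturated path: either a single matching edge, or a matching edge,
a non-matching edge, then a saturated path. -/
lemma sat_cases {M : Set (Sym2 V)} (hMd : DisjointEdges M) {x y : V} (q : G.Walk x y)
    (hq : IsSaturatedPath M q) :
    (∃ (h : G.Adj x y), q = Walk.cons h Walk.nil ∧ s(x, y) ∈ M) ∨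
    (∃ (a b : V) (h1 : G.Adj x a) (h2 : G.Adj a b) (q₂ : G.Walk b y),
      q = Walk.cons h1 (Walk.cons h2 q₂) ∧ s(x, a) ∈ M ∧ s(a, b) ∉ M ∧
      IsSaturatedPath M q₂) := by
  obtain ⟨hpath, hodd, hcov⟩ := hq
  obtain ⟨e, heq, heM, hxe⟩ := hcov x (Walk.start_mem_support q)
  obtain ⟨a, h1, q', hq_eq, he⟩ := first_edge hpath heq hxe
  subst hq_eq
  subst he
  cases q' with
  | nil => exact Or.inl ⟨h1, rfl, heM⟩
  | cons h2 q₂ =>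
    rename_i b
    have hxnotin : x ∉ (Walk.cons h2 q₂).support := ((Walk.cons_isPath_iff _ _).mp hpath).2
    have hinner : (Walk.cons h2 q₂).IsPath := ((Walk.cons_isPath_iff _ _).mp hpath).1
    have hanotin : a ∉ q₂.support := ((Walk.cons_isPath_iff _ _).mp hinner).2
    have habM : s(a, b) ∉ M := by
      intro hab
      have : s(x, a) = s(a, b) :=
        match_unique hMd heM hab (Sym2.mem_mk_right x a) (Sym2.mem_mk_left a b)
      rw [Sym2.eq_iff] at this
      rcases this with ⟨hxa, -⟩ | ⟨hxb, -⟩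
      · exact h1.ne hxa
      · exact hxnotin (by
          rw [hxb, Walk.support_cons]
          exact List.mem_cons_of_mem _ (Walk.start_mem_support q₂))
    refine Or.inr ⟨a, b, h1, h2, q₂, rfl, heM, habM, ?_, ?_, ?_⟩
    · exact ((Walk.cons_isPath_iff _ _).mp hinner).1
    · obtain ⟨k, hk⟩ := hodd
      rw [Walk.length_cons, Walk.length_cons] at hk
      exact ⟨k - 1, by omega⟩
    · intro t ht
      have htq : t ∈ (Walk.cons h1 (Walk.cons h2 q₂)).support := by
        rw [Walk.support_cons, Walk.support_cons]
        exact List.mem_cons_of_mem _ (List.mem_cons_of_mem _ ht)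
      obtain ⟨e', he'q, he'M, hte'⟩ := hcov t htq
      rw [Walk.edges_cons, Walk.edges_cons, List.mem_cons, List.mem_cons] at he'q
      rcases he'q with rfl | rfl | he'q
      · exfalso
        rcases Sym2.mem_iff.mp hte' with rfl | rfl
        · exact hxnotin (by rw [Walk.support_cons]; exact List.mem_cons_of_mem _ ht)
        · exact hanotin ht
      · exact absurd he'M habM
      · exact ⟨e', he'q, he'M, hte'⟩

/-- Base: exposing a vertex of the saturated path `q` together with one of its two ends. -/
lemma gp_base {M : Set (Sym2 V)} (hGM : IsMatchingSet G M) {D : Set V}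
    (hDcov : Covers D (restr D M)) :
    ∀ (n : ℕ) {x y : V} (q : G.Walk x y), q.length = n → IsSaturatedPath M q →
    (∀ t ∈ q.support, t ∈ D) →
    ∀ z ∈ q.support,
    ∃ N : Set (Sym2 V),
      (Expo G D N z x ∨ Expo G D N z y) ∧
      (N \ restr D M) ∪ (restr D M \ N) ⊆ {e | e ∈ q.edges} := by
  intro n
  induction n using Nat.strong_induction_on with
  | _ n IHn =>
  intro x y q hlen hq hqD z hz
  rcases sat_cases hGM.2 q hq with ⟨hadj, hq_eq, hxyM⟩ | ⟨a, b, h1, h2, q₂, hq_eq, he₁, he₂, hq₂⟩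
  · -- single matching edge
    subst hq_eq
    have hxD : x ∈ D := hqD x (Walk.start_mem_support _)
    have hyD : y ∈ D := hqD y (Walk.end_mem_support _)
    have hxyR : s(x, y) ∈ restr D M := ⟨hxyM, fun t ht => by
      rcases Sym2.mem_iff.mp ht with rfl | rfl
      · exact hxD
      · exact hyD⟩
    have hely : ∀ e ∈ restr D M, x ∈ e ∨ y ∈ e → e = s(x, y) := by
      rintro e heR (hxe | hye)
      · exact match_unique hGM.2 heR.1 hxyM hxe (Sym2.mem_mk_left x y)
      · exact match_unique hGM.2 heR.1 hxyM hye (Sym2.mem_mk_right x y)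
    set N := restr D M \ {s(x, y)} with hN
    have hexpo : Within (D \ {x, y}) N ∧ Covers (D \ {x, y}) N := by
      constructor
      · rintro e ⟨heR, hee⟩ t hte
        refine ⟨heR.2 t hte, ?_⟩
        intro hmem
        apply hee
        rw [Set.mem_singleton_iff]
        rcases hmem with rfl | hmem
        · exact hely e heR (Or.inl hte)
        · rw [Set.mem_singleton_iff] at hmem
          subst hmem
          exact hely e heR (Or.inr hte)
      · rintro t ⟨htD, htne⟩
        obtain ⟨e, heR, hte⟩ := hDcov t htD
        refine ⟨e, ⟨heR, fun hee => ?_⟩, hte⟩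
        rw [Set.mem_singleton_iff] at hee
        subst hee
        rcases Sym2.mem_iff.mp hte with rfl | rfl
        · exact htne (Or.inl rfl)
        · exact htne (Or.inr rfl)
    have hdel : (N \ restr D M) ∪ (restr D M \ N) ⊆ {e | e ∈ (Walk.cons hadj Walk.nil).edges} := by
      rintro e (⟨he1, he2⟩ | ⟨he1, he2⟩)
      · exact absurd he1.1 he2
      · have : e = s(x, y) := by
          by_contra hee
          exact he2 ⟨he1, fun h => hee (Set.mem_singleton_iff.mp h)⟩
        subst this
        simp [Walk.edges_cons]
    rw [Walk.support_cons, Walk.support_nil] at hz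
    simp only [List.mem_cons, List.mem_singleton, List.not_mem_nil, or_false] at hz
    rcases hz with hzx | hzy
    · -- z = x : expose {x, y} (right disjunct, with pair {z, y})
      rw [hzx]
      refine ⟨N, Or.inr ⟨fun e he => hGM.1 he.1.1, fun e he f hf hne => hGM.2 e he.1.1 f hf.1.1 hne,
        hexpo.1, hexpo.2, hadj.ne⟩, hdel⟩
    · -- z = y : expose {y, x} (left disjunct, with pair {z, x})
      rw [hzy]
      refine ⟨N, Or.inl ⟨fun e he => hGM.1 he.1.1, fun e he f hf hne => hGM.2 e he.1.1 f hf.1.1 hne,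
        ?_, ?_, hadj.ne.symm⟩, hdel⟩
      · have hcomm : ({y, x} : Set V) = {x, y} := Set.pair_comm y x
        rw [hcomm]; exact hexpo.1
      · have hcomm : ({y, x} : Set V) = {x, y} := Set.pair_comm y x
        rw [hcomm]; exact hexpo.2
  · -- q = x -e₁- a -e₂- b ⌢ q₂
    subst hq_eq
    have hpath := hq.1
    have hxnotin : x ∉ (Walk.cons h2 q₂).support := ((Walk.cons_isPath_iff _ _).mp hpath).2
    have hinner : (Walk.cons h2 q₂).IsPath := ((Walk.cons_isPath_iff _ _).mp hpath).1
    have hanotin : a ∉ q₂.support := ((Walk.cons_isPath_iff _ _).mp hinner).2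
    have hxa : x ≠ a := h1.ne
    have hab : a ≠ b := h2.ne
    have hxb : x ≠ b := by
      intro h
      apply hxnotin
      rw [h, Walk.support_cons]
      exact List.mem_cons_of_mem _ (Walk.start_mem_support q₂)
    have hxq₂ : x ∉ q₂.support := fun h => hxnotin (by
      rw [Walk.support_cons]; exact List.mem_cons_of_mem _ h)
    have hxD : x ∈ D := hqD x (Walk.start_mem_support _)
    have haD : a ∈ D := hqD a (by
      rw [Walk.support_cons]
      exact List.mem_cons_of_mem _ (Walk.start_mem_support _))
    have hbD : b ∈ D := hqD b (by
      rw [Walk.support_cons, Walk.support_cons]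
      refine List.mem_cons_of_mem _ (List.mem_cons_of_mem _ (Walk.start_mem_support _)))
    have hq₂D : ∀ t ∈ q₂.support, t ∈ D := by
      intro t ht
      exact hqD t (by
        rw [Walk.support_cons, Walk.support_cons]
        exact List.mem_cons_of_mem _ (List.mem_cons_of_mem _ ht))
    have he₁R : s(x, a) ∈ restr D M := ⟨he₁, fun t ht => by
      rcases Sym2.mem_iff.mp ht with rfl | rfl
      · exact hxD
      · exact haD⟩
    have hyq₂ : y ∈ q₂.support := Walk.end_mem_support q₂
    have hay : a ≠ y := fun h => hanotin (h ▸ hyq₂)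
    have hxy : x ≠ y := fun h => hxq₂ (h ▸ hyq₂)
    -- e₁ is the unique matching edge at x and at a
    have hme₁x : ∀ e ∈ restr D M, x ∈ e → e = s(x, a) := fun e heR hxe =>
      match_unique hGM.2 heR.1 he₁ hxe (Sym2.mem_mk_left x a)
    have hme₁a : ∀ e ∈ restr D M, a ∈ e → e = s(x, a) := fun e heR hae =>
      match_unique hGM.2 heR.1 he₁ hae (Sym2.mem_mk_right x a)
    -- the edge set of q
    have hedges_q : ∀ e : Sym2 V,
        e ∈ (Walk.cons h1 (Walk.cons h2 q₂)).edges ↔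
        e = s(x, a) ∨ e = s(a, b) ∨ e ∈ q₂.edges := by
      intro e
      rw [Walk.edges_cons, Walk.edges_cons, List.mem_cons, List.mem_cons]
    rw [Walk.support_cons, Walk.support_cons] at hz
    simp only [List.mem_cons] at hz
    -- helper: given an exposure from the induction hypothesis containing e₁, flip it
    rcases hz with hzx | hza | hzq₂
    · -- z = x : expose {x, y}
      rw [hzx]
      obtain ⟨Nb, hNb_or, hNb_del⟩ := IHn q₂.length (by rw [← hlen]; simp [Walk.length_cons])
        q₂ rfl hq₂ hq₂D b (Walk.start_mem_support q₂)
      have hNb : Expo G D Nb b y := by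
        rcases hNb_or with h | h
        · exact absurd rfl h.2.2.2.2
        · exact h
      obtain ⟨hNbE, hNbD, hNbW, hNbC, hNbne⟩ := hNb
      have he₁Nb : s(x, a) ∈ Nb := by
        by_contra hnot
        have : s(x, a) ∈ (Nb \ restr D M) ∪ (restr D M \ Nb) := Or.inr ⟨he₁R, hnot⟩
        have := hNb_del this
        exact hxq₂ (q₂.fst_mem_support_of_mem_edges this)
      have he₂Nb : s(a, b) ∉ Nb := fun h =>
        ((hNbW _ h b (Sym2.mem_mk_right a b)).2 (Or.inl rfl))
      set N := insert s(a, b) (Nb \ {s(x, a)}) with hNdef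
      have hNsub : ∀ e ∈ N, e ∈ Nb ∨ e = s(a, b) := by
        rintro e (rfl | ⟨h, -⟩)
        · exact Or.inr rfl
        · exact Or.inl h
      have hNbax : ∀ e ∈ Nb, a ∈ e → e = s(x, a) := fun e he hae =>
        match_unique hNbD he he₁Nb hae (Sym2.mem_mk_right x a)
      have hNbxx : ∀ e ∈ Nb, x ∈ e → e = s(x, a) := fun e he hxe =>
        match_unique hNbD he he₁Nb hxe (Sym2.mem_mk_left x a)
      refine ⟨N, Or.inr ⟨?_, ?_, ?_, ?_, hxy⟩, ?_⟩
      · rintro e (rfl | ⟨h, -⟩)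
        · exact h2
        · exact hNbE h
      · rintro e he f hf hne t hte htf
        rcases hNsub e he with heNb | rfl
        · rcases hNsub f hf with hfNb | rfl
          · exact hNbD e heNb f hfNb hne t hte htf
          · -- f = s(a,b)
            rcases Sym2.mem_iff.mp htf with rfl | rfl
            · have hthis := hNbax e heNb hte
              rcases he with rfl | ⟨-, hne'⟩
              · rw [Sym2.eq_iff] at hthis
                rcases hthis with ⟨h₁', -⟩ | ⟨-, h₂'⟩
                · exact hxa h₁'.symm
                · exact hxb h₂'.symm
              · exact hne' (Set.mem_singleton_iff.mpr hthis)
            · exact (hNbW e heNb t hte).2 (Or.inl rfl)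
        · rcases hNsub f hf with hfNb | rfl
          · rcases Sym2.mem_iff.mp hte with rfl | rfl
            · have := hNbax f hfNb htf
              rcases hf with rfl | ⟨-, hne'⟩
              · exact hne rfl
              · exact hne' (Set.mem_singleton_iff.mpr this)
            · exact (hNbW f hfNb t htf).2 (Or.inl rfl)
          · exact hne rfl
      · -- Within D \ {x, y}
        rintro e he t hte
        rcases hNsub e he with heNb | rfl
        · obtain ⟨hW1, hW2⟩ := hNbW e heNb t hte
          refine ⟨hW1, ?_⟩
          rintro (rfl | ht)
          · rcases he with rfl | ⟨-, hne'⟩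
            · exact he₂Nb heNb
            · exact hne' (Set.mem_singleton_iff.mpr (hNbxx e heNb hte))
          · rw [Set.mem_singleton_iff] at ht
            subst ht
            exact hW2 (Or.inr rfl)
        · rcases Sym2.mem_iff.mp hte with rfl | rfl
          · refine ⟨haD, ?_⟩
            rintro (rfl | ht)
            · exact hxa rfl
            · exact hay (Set.mem_singleton_iff.mp ht)
          · refine ⟨hbD, ?_⟩
            rintro (rfl | ht)
            · exact hxb rfl
            · exact hNbne (Set.mem_singleton_iff.mp ht)
      · -- Covers D \ {x, y}
        rintro t ⟨htD, htne⟩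
        by_cases hta : t = a
        · exact ⟨s(a, b), Set.mem_insert _ _, hta ▸ Sym2.mem_mk_left a b⟩
        by_cases htb : t = b
        · exact ⟨s(a, b), Set.mem_insert _ _, htb ▸ Sym2.mem_mk_right a b⟩
        have : t ∈ D \ {b, y} := ⟨htD, by
          rintro (rfl | ht)
          · exact htb rfl
          · exact htne (Or.inr ht)⟩
        obtain ⟨g, hgNb, htg⟩ := hNbC t this
        refine ⟨g, Set.mem_insert_of_mem _ ⟨hgNb, fun hg => ?_⟩, htg⟩
        rw [Set.mem_singleton_iff] at hg
        subst hg
        rcases Sym2.mem_iff.mp htg with rfl | rfl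
        · exact htne (Or.inl rfl)
        · exact hta rfl
      · -- symmetric difference within the edges of q
        rintro e (⟨he1, he2⟩ | ⟨he1, he2⟩)
        · rcases hNsub e he1 with heNb | rfl
          · have : e ∈ (Nb \ restr D M) ∪ (restr D M \ Nb) := Or.inl ⟨heNb, he2⟩
            have := hNb_del this
            rw [Set.mem_setOf_eq] at this ⊢
            rw [hedges_q]
            exact Or.inr (Or.inr this)
          · rw [Set.mem_setOf_eq, hedges_q]
            exact Or.inr (Or.inl rfl)
        · rw [Set.mem_setOf_eq, hedges_q]
          by_cases hee : e = s(x, a)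
          · exact Or.inl hee
          · have : e ∉ Nb := by
              intro hh
              exact he2 (Set.mem_insert_of_mem _ ⟨hh, fun hsing => hee
                (Set.mem_singleton_iff.mp hsing)⟩)
            have : e ∈ (Nb \ restr D M) ∪ (restr D M \ Nb) := Or.inr ⟨he1, this⟩
            have := hNb_del this
            rw [Set.mem_setOf_eq] at this
            exact Or.inr (Or.inr this)
    · -- z = a : expose {a, x} with N = restr D M minus e₁
      rw [hza]
      set N := restr D M \ {s(x, a)} with hNdef
      refine ⟨N, Or.inl ⟨fun e he => hGM.1 he.1.1,
        fun e he f hf hne => hGM.2 e he.1.1 f hf.1.1 hne, ?_, ?_, Ne.symm hxa⟩, ?_⟩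
      · rintro e ⟨heR, hee⟩ t hte
        refine ⟨heR.2 t hte, ?_⟩
        rintro (rfl | ht)
        · exact hee (Set.mem_singleton_iff.mpr (hme₁a e heR hte))
        · rw [Set.mem_singleton_iff] at ht
          subst ht
          exact hee (Set.mem_singleton_iff.mpr (hme₁x e heR hte))
      · rintro t ⟨htD, htne⟩
        obtain ⟨e, heR, hte⟩ := hDcov t htD
        refine ⟨e, ⟨heR, fun hee => ?_⟩, hte⟩
        rw [Set.mem_singleton_iff] at hee
        subst hee
        rcases Sym2.mem_iff.mp hte with rfl | rfl
        · exact htne (Or.inr rfl)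
        · exact htne (Or.inl rfl)
      · rintro e (⟨he1, he2⟩ | ⟨he1, he2⟩)
        · exact absurd he1.1 he2
        · have : e = s(x, a) := by
            by_contra hee
            exact he2 ⟨he1, fun h => hee (Set.mem_singleton_iff.mp h)⟩
          subst this
          rw [Set.mem_setOf_eq, hedges_q]
          exact Or.inl rfl
    · -- z is in q₂
      obtain ⟨Nz, hNz_or, hNz_del⟩ := IHn q₂.length (by rw [← hlen]; simp [Walk.length_cons])
        q₂ rfl hq₂ hq₂D z hzq₂
      have hzx : z ≠ x := fun h => hxq₂ (h ▸ hzq₂)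
      have hza : z ≠ a := fun h => hanotin (h ▸ hzq₂)
      rcases hNz_or with ⟨hNzE, hNzD, hNzW, hNzC, hzb⟩ | hNz
      · -- pair {z, b} : flip to pair {z, x}
        have he₁Nz : s(x, a) ∈ Nz := by
          by_contra hnot
          have : s(x, a) ∈ (Nz \ restr D M) ∪ (restr D M \ Nz) := Or.inr ⟨he₁R, hnot⟩
          have := hNz_del this
          exact hxq₂ (q₂.fst_mem_support_of_mem_edges this)
        have he₂Nz : s(a, b) ∉ Nz := fun h =>
          ((hNzW _ h b (Sym2.mem_mk_right a b)).2 (Or.inr rfl))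
        set N := insert s(a, b) (Nz \ {s(x, a)}) with hNdef
        have hNsub : ∀ e ∈ N, e ∈ Nz ∨ e = s(a, b) := by
          rintro e (rfl | ⟨h, -⟩)
          · exact Or.inr rfl
          · exact Or.inl h
        have hNzax : ∀ e ∈ Nz, a ∈ e → e = s(x, a) := fun e he hae =>
          match_unique hNzD he he₁Nz hae (Sym2.mem_mk_right x a)
        have hNzxx : ∀ e ∈ Nz, x ∈ e → e = s(x, a) := fun e he hxe =>
          match_unique hNzD he he₁Nz hxe (Sym2.mem_mk_left x a)
        refine ⟨N, Or.inl ⟨?_, ?_, ?_, ?_, hzx⟩, ?_⟩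
        · rintro e (rfl | ⟨h, -⟩)
          · exact h2
          · exact hNzE h
        · rintro e he f hf hne t hte htf
          rcases hNsub e he with heNz | rfl
          · rcases hNsub f hf with hfNz | rfl
            · exact hNzD e heNz f hfNz hne t hte htf
            · rcases Sym2.mem_iff.mp htf with rfl | rfl
              · have hthis := hNzax e heNz hte
                rcases he with rfl | ⟨-, hne'⟩
                · rw [Sym2.eq_iff] at hthis
                  rcases hthis with ⟨h₁', -⟩ | ⟨-, h₂'⟩
                  · exact hxa h₁'.symm
                  · exact hxb h₂'.symm
                · exact hne' (Set.mem_singleton_iff.mpr hthis)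
              · exact (hNzW e heNz t hte).2 (Or.inr rfl)
          · rcases hNsub f hf with hfNz | rfl
            · rcases Sym2.mem_iff.mp hte with rfl | rfl
              · have := hNzax f hfNz htf
                rcases hf with rfl | ⟨-, hne'⟩
                · exact hne rfl
                · exact hne' (Set.mem_singleton_iff.mpr this)
              · exact (hNzW f hfNz t htf).2 (Or.inr rfl)
            · exact hne rfl
        · rintro e he t hte
          rcases hNsub e he with heNz | rfl
          · obtain ⟨hW1, hW2⟩ := hNzW e heNz t hte
            refine ⟨hW1, ?_⟩
            rintro (rfl | ht)
            · exact hW2 (Or.inl rfl)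
            · rw [Set.mem_singleton_iff] at ht
              subst ht
              rcases he with rfl | ⟨-, hne'⟩
              · exact he₂Nz heNz
              · exact hne' (Set.mem_singleton_iff.mpr (hNzxx e heNz hte))
          · rcases Sym2.mem_iff.mp hte with rfl | rfl
            · refine ⟨haD, ?_⟩
              rintro (ht | ht)
              · exact hza ht.symm
              · exact hxa (Set.mem_singleton_iff.mp ht).symm
            · refine ⟨hbD, ?_⟩
              rintro (ht | ht)
              · exact hzb ht.symm
              · exact hxb (Set.mem_singleton_iff.mp ht).symm
        · rintro t ⟨htD, htne⟩
          by_cases hta : t = a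
          · exact ⟨s(a, b), Set.mem_insert _ _, hta ▸ Sym2.mem_mk_left a b⟩
          by_cases htb : t = b
          · exact ⟨s(a, b), Set.mem_insert _ _, htb ▸ Sym2.mem_mk_right a b⟩
          have : t ∈ D \ {z, b} := ⟨htD, by
            rintro (rfl | ht)
            · exact htne (Or.inl rfl)
            · exact htb (Set.mem_singleton_iff.mp ht)⟩
          obtain ⟨g, hgNz, htg⟩ := hNzC t this
          refine ⟨g, Set.mem_insert_of_mem _ ⟨hgNz, fun hg => ?_⟩, htg⟩
          rw [Set.mem_singleton_iff] at hg
          subst hg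
          rcases Sym2.mem_iff.mp htg with rfl | rfl
          · exact htne (Or.inr rfl)
          · exact hta rfl
        · rintro e (⟨he1, he2⟩ | ⟨he1, he2⟩)
          · rcases hNsub e he1 with heNz | rfl
            · have : e ∈ (Nz \ restr D M) ∪ (restr D M \ Nz) := Or.inl ⟨heNz, he2⟩
              have := hNz_del this
              rw [Set.mem_setOf_eq] at this ⊢
              rw [hedges_q]
              exact Or.inr (Or.inr this)
            · rw [Set.mem_setOf_eq, hedges_q]
              exact Or.inr (Or.inl rfl)
          · rw [Set.mem_setOf_eq, hedges_q]
            by_cases hee : e = s(x, a)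
            · exact Or.inl hee
            · have hh : e ∉ Nz := by
                intro hh
                exact he2 (Set.mem_insert_of_mem _ ⟨hh, fun hsing => hee
                  (Set.mem_singleton_iff.mp hsing)⟩)
              have : e ∈ (Nz \ restr D M) ∪ (restr D M \ Nz) := Or.inr ⟨he1, hh⟩
              have := hNz_del this
              rw [Set.mem_setOf_eq] at this
              exact Or.inr (Or.inr this)
      · -- pair {z, y} : keep
        refine ⟨Nz, Or.inr hNz, ?_⟩
        intro e he
        have := hNz_del he
        rw [Set.mem_setOf_eq] at this ⊢
        rw [hedges_q]
        exact Or.inr (Or.inr this)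

end S9
namespace S9
open SimpleGraph Walk List
variable {V : Type*} {G : SimpleGraph V}

/-- Propagating exposure along an alternating path that starts with a matching edge and
ends on the saturated path `q`. -/
lemma gp_ind {M : Set (Sym2 V)} (hGM : IsMatchingSet G M) {D : Set V}
    (hDcov : Covers D (restr D M)) {x y : V} (q : G.Walk x y)
    (hq : IsSaturatedPath M q) (hqD : ∀ t ∈ q.support, t ∈ D) :
    ∀ (n : ℕ) {w z : V} (W : G.Walk w z), W.length = n → W.IsPath →
      List.IsChain (fun e f => e ∈ M ↔ f ∉ M) W.edges →
      (∀ e ∈ W.edges.head?, e ∈ M) →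
      (∀ t ∈ W.support, t ∈ D) → z ∈ q.support →
      ∃ N : Set (Sym2 V),
        (Expo G D N w x ∨ Expo G D N w y) ∧
        (N \ restr D M) ∪ (restr D M \ N) ⊆ {e | e ∈ q.edges} ∪ {e | e ∈ W.edges} := by
  intro n
  induction n using Nat.strong_induction_on with
  | _ n IHn =>
  intro w z W hlen hWp hWch hWh hWD hzq
  by_cases hwq : w ∈ q.support
  · obtain ⟨N, hor, hdel⟩ := gp_base hGM hDcov q.length q rfl hq hqD w hwq
    exact ⟨N, hor, fun e he => Or.inl (hdel he)⟩
  · cases W with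
    | nil => exact absurd hzq hwq
    | cons h1 W₂ =>
      rename_i a
      have he₁ : s(w, a) ∈ M := by
        apply hWh
        rw [Walk.edges_cons, List.head?_cons]
        rfl
      cases W₂ with
      | nil =>
        -- the matching edge at z lies on q, so w would be on q
        exfalso
        obtain ⟨e, heq, heM, hze⟩ := hq.2.2 z hzq
        have : e = s(w, z) := match_unique hGM.2 heM he₁ hze (Sym2.mem_mk_right w z)
        subst this
        exact hwq (q.fst_mem_support_of_mem_edges heq)
      | cons h2 W₃ =>
        rename_i b
        have hwnotin : w ∉ (Walk.cons h2 W₃).support := ((Walk.cons_isPath_iff _ _).mp hWp).2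
        have hinner : (Walk.cons h2 W₃).IsPath := ((Walk.cons_isPath_iff _ _).mp hWp).1
        have hanotin : a ∉ W₃.support := ((Walk.cons_isPath_iff _ _).mp hinner).2
        have hwa : w ≠ a := h1.ne
        have hwb : w ≠ b := by
          intro h
          apply hwnotin
          rw [h, Walk.support_cons]
          exact List.mem_cons_of_mem _ (Walk.start_mem_support W₃)
        have hwW₃ : w ∉ W₃.support := fun h => hwnotin (by
          rw [Walk.support_cons]; exact List.mem_cons_of_mem _ h)
        have hwD : w ∈ D := hWD w (Walk.start_mem_support _)
        have haD : a ∈ D := hWD a (by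
          rw [Walk.support_cons]
          exact List.mem_cons_of_mem _ (Walk.start_mem_support _))
        have hbD : b ∈ D := hWD b (by
          rw [Walk.support_cons, Walk.support_cons]
          exact List.mem_cons_of_mem _ (List.mem_cons_of_mem _ (Walk.start_mem_support _)))
        have hW₃D : ∀ t ∈ W₃.support, t ∈ D := fun t ht => hWD t (by
          rw [Walk.support_cons, Walk.support_cons]
          exact List.mem_cons_of_mem _ (List.mem_cons_of_mem _ ht))
        rw [Walk.edges_cons] at hWch
        have he₂ : s(a, b) ∉ M := by
          have hj := (List.isChain_cons.mp hWch).1 s(a, b) (by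
            rw [Walk.edges_cons, List.head?_cons]; rfl)
          exact hj.mp he₁
        have hW₂ch := (List.isChain_cons.mp hWch).2
        rw [Walk.edges_cons] at hW₂ch
        have hW₃ch := (List.isChain_cons.mp hW₂ch).2
        have hW₃h : ∀ e ∈ W₃.edges.head?, e ∈ M := by
          intro e he
          have hj := (List.isChain_cons.mp hW₂ch).1 e he
          by_contra hnot
          exact he₂ (hj.mpr hnot)
        have hW₃p : W₃.IsPath := ((Walk.cons_isPath_iff _ _).mp hinner).1
        obtain ⟨Nb, hNb_or, hNb_del⟩ := IHn W₃.length
          (by rw [← hlen]; simp [Walk.length_cons]) W₃ rfl hW₃p hW₃ch hW₃h hW₃D hzq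
        have he₁R : s(w, a) ∈ restr D M := ⟨he₁, fun t ht => by
          rcases Sym2.mem_iff.mp ht with rfl | rfl
          · exact hwD
          · exact haD⟩
        -- uniform flipping construction
        have flipkey : ∀ (χ : V) (Nb : Set (Sym2 V)),
            Expo G D Nb b χ →
            ((Nb \ restr D M) ∪ (restr D M \ Nb)
              ⊆ {e | e ∈ q.edges} ∪ {e | e ∈ W₃.edges}) →
            Expo G D (insert s(a, b) (Nb \ {s(w, a)})) w χ ∧
            ((insert s(a, b) (Nb \ {s(w, a)}) \ restr D M)
              ∪ (restr D M \ insert s(a, b) (Nb \ {s(w, a)}))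
              ⊆ {e | e ∈ q.edges} ∪ {e | e ∈ (Walk.cons h1 (Walk.cons h2 W₃)).edges}) := by
          intro χ Nb hNb hNb_del
          obtain ⟨hNbE, hNbD, hNbW, hNbC, hbχ⟩ := hNb
          have he₁Nb : s(w, a) ∈ Nb := by
            by_contra hnot
            have hmem : s(w, a) ∈ (Nb \ restr D M) ∪ (restr D M \ Nb) := Or.inr ⟨he₁R, hnot⟩
            rcases hNb_del hmem with hh | hh
            · exact hwq (q.fst_mem_support_of_mem_edges hh)
            · exact hwW₃ (W₃.fst_mem_support_of_mem_edges hh)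
          have he₂Nb : s(a, b) ∉ Nb := fun h =>
            ((hNbW _ h b (Sym2.mem_mk_right a b)).2 (Or.inl rfl))
          have hNbaw : ∀ e ∈ Nb, w ∈ e → e = s(w, a) := fun e he hwe =>
            match_unique hNbD he he₁Nb hwe (Sym2.mem_mk_left w a)
          have hNbaa : ∀ e ∈ Nb, a ∈ e → e = s(w, a) := fun e he hae =>
            match_unique hNbD he he₁Nb hae (Sym2.mem_mk_right w a)
          obtain ⟨hwD', hwne⟩ := hNbW _ he₁Nb w (Sym2.mem_mk_left w a)
          obtain ⟨haD', hane⟩ := hNbW _ he₁Nb a (Sym2.mem_mk_right w a)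
          have hwχ : w ≠ χ := fun h => hwne (Or.inr (h ▸ rfl))
          have haχ : a ≠ χ := fun h => hane (Or.inr (h ▸ rfl))
          have hab : a ≠ b := h2.ne
          set N := insert s(a, b) (Nb \ {s(w, a)}) with hNdef
          have hNsub : ∀ e ∈ N, e ∈ Nb ∨ e = s(a, b) := by
            rintro e (rfl | ⟨h, -⟩)
            · exact Or.inr rfl
            · exact Or.inl h
          have hedgesW : ∀ e : Sym2 V,
              e ∈ (Walk.cons h1 (Walk.cons h2 W₃)).edges ↔
              e = s(w, a) ∨ e = s(a, b) ∨ e ∈ W₃.edges := by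
            intro e
            rw [Walk.edges_cons, Walk.edges_cons, List.mem_cons, List.mem_cons]
          refine ⟨⟨?_, ?_, ?_, ?_, hwχ⟩, ?_⟩
          · rintro e (rfl | ⟨h, -⟩)
            · exact h2
            · exact hNbE h
          · rintro e he f hf hne t hte htf
            rcases hNsub e he with heNb | rfl
            · rcases hNsub f hf with hfNb | rfl
              · exact hNbD e heNb f hfNb hne t hte htf
              · rcases Sym2.mem_iff.mp htf with rfl | rfl
                · have hthis := hNbaa e heNb hte
                  rcases he with rfl | ⟨-, hne'⟩
                  · rw [Sym2.eq_iff] at hthis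
                    rcases hthis with ⟨h₁', -⟩ | ⟨-, h₂'⟩
                    · exact hwa h₁'.symm
                    · exact hwb h₂'.symm
                  · exact hne' (Set.mem_singleton_iff.mpr hthis)
                · exact (hNbW e heNb t hte).2 (Or.inl rfl)
            · rcases hNsub f hf with hfNb | rfl
              · rcases Sym2.mem_iff.mp hte with rfl | rfl
                · have hthis := hNbaa f hfNb htf
                  rcases hf with rfl | ⟨-, hne'⟩
                  · exact hne rfl
                  · exact hne' (Set.mem_singleton_iff.mpr hthis)
                · exact (hNbW f hfNb t htf).2 (Or.inl rfl)
              · exact hne rfl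
          · -- Within D \ {w, χ}
            rintro e he t hte
            rcases hNsub e he with heNb | rfl
            · obtain ⟨hW1, hW2⟩ := hNbW e heNb t hte
              refine ⟨hW1, ?_⟩
              rintro (rfl | ht)
              · rcases he with rfl | ⟨-, hne'⟩
                · exact he₂Nb heNb
                · exact hne' (Set.mem_singleton_iff.mpr (hNbaw e heNb hte))
              · rw [Set.mem_singleton_iff] at ht
                subst ht
                exact hW2 (Or.inr rfl)
            · rcases Sym2.mem_iff.mp hte with rfl | rfl
              · refine ⟨haD, ?_⟩
                rintro (ht | ht)
                · exact hwa ht.symm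
                · exact haχ (Set.mem_singleton_iff.mp ht)
              · refine ⟨hbD, ?_⟩
                rintro (ht | ht)
                · exact hwb ht.symm
                · exact hbχ (Set.mem_singleton_iff.mp ht)
          · -- Covers D \ {w, χ}
            rintro t ⟨htD, htne⟩
            by_cases hta : t = a
            · exact ⟨s(a, b), Set.mem_insert _ _, hta ▸ Sym2.mem_mk_left a b⟩
            by_cases htb : t = b
            · exact ⟨s(a, b), Set.mem_insert _ _, htb ▸ Sym2.mem_mk_right a b⟩
            have htmem : t ∈ D \ {b, χ} := ⟨htD, by
              rintro (ht | ht)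
              · exact htb ht
              · exact htne (Or.inr ht)⟩
            obtain ⟨g, hgNb, htg⟩ := hNbC t htmem
            refine ⟨g, Set.mem_insert_of_mem _ ⟨hgNb, fun hg => ?_⟩, htg⟩
            rw [Set.mem_singleton_iff] at hg
            subst hg
            rcases Sym2.mem_iff.mp htg with rfl | rfl
            · exact htne (Or.inl rfl)
            · exact hta rfl
          · -- symmetric difference
            rintro e (⟨he1, he2⟩ | ⟨he1, he2⟩)
            · rcases hNsub e he1 with heNb | rfl
              · have hmem : e ∈ (Nb \ restr D M) ∪ (restr D M \ Nb) := Or.inl ⟨heNb, he2⟩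
                rcases hNb_del hmem with hh | hh
                · exact Or.inl hh
                · refine Or.inr ?_
                  rw [Set.mem_setOf_eq, hedgesW]
                  exact Or.inr (Or.inr hh)
              · refine Or.inr ?_
                rw [Set.mem_setOf_eq, hedgesW]
                exact Or.inr (Or.inl rfl)
            · by_cases hee : e = s(w, a)
              · refine Or.inr ?_
                rw [Set.mem_setOf_eq, hedgesW]
                exact Or.inl hee
              · have hh : e ∉ Nb := by
                  intro hh
                  exact he2 (Set.mem_insert_of_mem _ ⟨hh, fun hsing => hee
                    (Set.mem_singleton_iff.mp hsing)⟩)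
                have hmem : e ∈ (Nb \ restr D M) ∪ (restr D M \ Nb) := Or.inr ⟨he1, hh⟩
                rcases hNb_del hmem with hh' | hh'
                · exact Or.inl hh'
                · refine Or.inr ?_
                  rw [Set.mem_setOf_eq, hedgesW]
                  exact Or.inr (Or.inr hh')
        rcases hNb_or with hNb | hNb
        · obtain ⟨hE, hdel⟩ := flipkey x Nb hNb hNb_del
          exact ⟨_, Or.inl hE, hdel⟩
        · obtain ⟨hE, hdel⟩ := flipkey y Nb hNb hNb_del
          exact ⟨_, Or.inr hE, hdel⟩

end S9
namespace S9
open SimpleGraph Walk List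
variable {V : Type*} {G : SimpleGraph V}

lemma mem_val_edge {S : Set V} {α β : ↥S} {t : V} (h : t ∈ s(α.1, β.1)) :
    ∃ σ : ↥S, ((some σ : Option ↥S) ∈ s((some α : Option ↥S), some β)) ∧ σ.1 = t := by
  rcases Sym2.mem_iff.mp h with rfl | rfl
  · exact ⟨α, Sym2.mem_mk_left _ _, rfl⟩
  · exact ⟨β, Sym2.mem_mk_right _ _, rfl⟩

lemma some_edge_of_val_eq {S : Set V} {α β γ δ : ↥S}
    (h : s((some α : Option ↥S), some β) = s(some γ, some δ)) :
    s(α.1, β.1) = s(γ.1, δ.1) := by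
  rw [Sym2.eq_iff] at h ⊢
  rcases h with ⟨h1, h2⟩ | ⟨h1, h2⟩
  · exact Or.inl ⟨congrArg Subtype.val (Option.some_injective _ h1),
      congrArg Subtype.val (Option.some_injective _ h2)⟩
  · exact Or.inr ⟨congrArg Subtype.val (Option.some_injective _ h1),
      congrArg Subtype.val (Option.some_injective _ h2)⟩

lemma none_not_mem_ss {S : Set V} {γ δ : ↥S} :
    (none : Option ↥S) ∉ s((some γ : Option ↥S), some δ) := by
  intro h
  rcases Sym2.mem_iff.mp h with h | h <;> cases h

/-- disjointness transfers along the valuation of some-some edges. -/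
lemma val_disjoint {X C1 : Set V} {NN : Set (Sym2 (Option ↥(X \ C1)))}
    (hdisj : DisjointEdges NN) {α β γ δ : ↥(X \ C1)}
    (hE : s(some α, some β) ∈ NN) (hF : s(some γ, some δ) ∈ NN)
    (hne : s(α.1, β.1) ≠ s(γ.1, δ.1)) {t : V}
    (hte : t ∈ s(α.1, β.1)) (htf : t ∈ s(γ.1, δ.1)) : False := by
  obtain ⟨σ₁, hm₁, hv₁⟩ := mem_val_edge hte
  obtain ⟨σ₂, hm₂, hv₂⟩ := mem_val_edge htf
  have hσ : σ₁ = σ₂ := Subtype.ext (hv₁.trans hv₂.symm)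
  subst hσ
  by_cases hEE : s((some α : Option ↥(X \ C1)), some β) = s(some γ, some δ)
  · exact hne (some_edge_of_val_eq hEE)
  · exact hdisj _ hE _ hF hEE (some σ₁) hm₁ hm₂

/-- Pulling back a perfect matching of `G[X]/C1 − none` to `G`. -/
lemma pull_none {X C1 : Set V}
    (h : HasPMOn (contractOn G X C1) ({(none : Option ↥(X \ C1))}ᶜ)) :
    ∃ N : Set (Sym2 V), N ⊆ G.edgeSet ∧ DisjointEdges N ∧
      Within (X \ C1) N ∧ Covers (X \ C1) N := by
  obtain ⟨NN, ⟨hsub, hdisj⟩, hwithin, hcov⟩ := h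
  refine ⟨{e | ∃ α β : ↥(X \ C1), e = s(α.1, β.1) ∧ s(some α, some β) ∈ NN}, ?_, ?_, ?_, ?_⟩
  · rintro e ⟨α, β, rfl, hE⟩
    rw [SimpleGraph.mem_edgeSet]
    have := hsub hE
    rw [SimpleGraph.mem_edgeSet] at this
    exact this
  · rintro e ⟨α, β, rfl, hE⟩ f ⟨γ, δ, rfl, hF⟩ hne t hte htf
    exact val_disjoint hdisj hE hF hne hte htf
  · rintro e ⟨α, β, rfl, hE⟩ t hte
    rcases Sym2.mem_iff.mp hte with rfl | rfl
    · exact α.2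
    · exact β.2
  · intro t ht
    obtain ⟨E, hE, htE⟩ := hcov (some ⟨t, ht⟩) (by simp)
    obtain ⟨o, hoE⟩ := mem_other htE
    cases o with
    | none =>
      exfalso
      have := hwithin E hE none (by rw [hoE]; exact Sym2.mem_mk_right _ _)
      simp at this
    | some β =>
      refine ⟨s(t, β.1), ⟨⟨t, ht⟩, β, rfl, ?_⟩, Sym2.mem_mk_left _ _⟩
      rw [← hoE]
      exact hE

/-- Pulling back a near-perfect matching of `G[X]/C1` exposing `some t₀` to `G`. -/
lemma pull_some {X C1 : Set V} {t₀ : ↥(X \ C1)}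
    (h : HasPMOn (contractOn G X C1) ({(some t₀ : Option ↥(X \ C1))}ᶜ)) :
    ∃ (N : Set (Sym2 V)) (α c : V), α ∈ X \ C1 ∧ c ∈ C1 ∧ α ≠ t₀.1 ∧ s(α, c) ∈ N ∧
      N ⊆ G.edgeSet ∧ DisjointEdges N ∧
      (∀ e ∈ N, e ≠ s(α, c) → ∀ s : V, s ∈ e → s ∈ X \ C1 ∧ s ≠ t₀.1) ∧
      (∀ s ∈ X \ C1, s ≠ t₀.1 → ∃ e ∈ N, s ∈ e) := by
  obtain ⟨NN, ⟨hsub, hdisj⟩, hwithin, hcov⟩ := h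
  obtain ⟨E₀, hE₀, hnE₀⟩ := hcov none (by simp)
  obtain ⟨o, hoE₀⟩ := mem_other hnE₀
  cases o with
  | none =>
    exfalso
    have := hsub hE₀
    rw [hoE₀, SimpleGraph.mem_edgeSet] at this
    exact this
  | some α' =>
  have hadjc' : ∃ c ∈ C1, G.Adj α'.1 c := by
    have := hsub hE₀
    rw [hoE₀, SimpleGraph.mem_edgeSet] at this
    exact this
  obtain ⟨c, hcC1, hadjc⟩ := hadjc'
  have hα'E₀ : (some α' : Option ↥(X \ C1)) ∈ E₀ := by
    rw [hoE₀]; exact Sym2.mem_mk_right _ _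
  have hα't₀ : α' ≠ t₀ := by
    intro hh
    have := hwithin E₀ hE₀ (some α') hα'E₀
    rw [hh] at this
    simp at this
  have hcXC1 : c ∉ X \ C1 := fun hc' => hc'.2 hcC1
  have hvalne : ∀ γ : ↥(X \ C1), γ.1 ≠ t₀.1 → True := fun _ _ => trivial
  have hssne : ∀ (γ δ : ↥(X \ C1)), s((some γ : Option ↥(X \ C1)), some δ) ≠ E₀ := by
    intro γ δ hh
    apply none_not_mem_ss (S := X \ C1) (γ := γ) (δ := δ)
    rw [hh, hoE₀]
    exact Sym2.mem_mk_left _ _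
  have hmemNN : ∀ (γ : ↥(X \ C1)) (F : Sym2 (Option ↥(X \ C1))), F ∈ NN →
      (some γ : Option ↥(X \ C1)) ∈ F → γ ≠ t₀ := by
    intro γ F hF hm hh
    have := hwithin F hF (some γ) hm
    rw [hh] at this
    simp at this
  refine ⟨insert s(α'.1, c)
      {e | ∃ α β : ↥(X \ C1), e = s(α.1, β.1) ∧ s(some α, some β) ∈ NN},
    α'.1, c, α'.2, hcC1, fun hh => hα't₀ (Subtype.ext hh), Set.mem_insert _ _,
    ?_, ?_, ?_, ?_⟩
  · rintro e (rfl | ⟨α, β, rfl, hE⟩)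
    · rw [SimpleGraph.mem_edgeSet]; exact hadjc
    · rw [SimpleGraph.mem_edgeSet]
      have := hsub hE
      rw [SimpleGraph.mem_edgeSet] at this
      exact this
  · -- disjointness
    rintro e he f hf hne t hte htf
    rcases he with rfl | ⟨α, β, rfl, hE⟩
    · rcases hf with rfl | ⟨γ, δ, rfl, hF⟩
      · exact hne rfl
      · -- e designated, f from NN
        rcases Sym2.mem_iff.mp hte with rfl | rfl
        · -- t = α'.1
          obtain ⟨σ₂, hm₂, hv₂⟩ := mem_val_edge htf
          have hσ : σ₂ = α' := Subtype.ext hv₂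
          subst hσ
          exact hdisj _ hF _ hE₀ (hssne γ δ) (some σ₂) hm₂ hα'E₀
        · -- t = c ∈ C1 cannot be in an (X\C1)-edge
          apply hcXC1
          rcases Sym2.mem_iff.mp htf with rfl | rfl
          · exact γ.2
          · exact δ.2
    · rcases hf with rfl | ⟨γ, δ, rfl, hF⟩
      · rcases Sym2.mem_iff.mp htf with rfl | rfl
        · obtain ⟨σ₂, hm₂, hv₂⟩ := mem_val_edge hte
          have hσ : σ₂ = α' := Subtype.ext hv₂
          subst hσ
          exact hdisj _ hE _ hE₀ (hssne α β) (some σ₂) hm₂ hα'E₀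
        · apply hcXC1
          rcases Sym2.mem_iff.mp hte with rfl | rfl
          · exact α.2
          · exact β.2
      · exact val_disjoint hdisj hE hF hne hte htf
  · -- other edges live in (X \ C1) \ {t₀}
    rintro e he hne s hs
    rcases he with rfl | ⟨α, β, rfl, hE⟩
    · exact absurd rfl hne
    · rcases Sym2.mem_iff.mp hs with rfl | rfl
      · exact ⟨α.2, fun hh => hmemNN α _ hE (Sym2.mem_mk_left _ _) (Subtype.ext hh)⟩
      · exact ⟨β.2, fun hh => hmemNN β _ hE (Sym2.mem_mk_right _ _) (Subtype.ext hh)⟩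
  · -- coverage
    intro s hs hst₀
    have hsne : (some ⟨s, hs⟩ : Option ↥(X \ C1)) ∈ ({some t₀}ᶜ : Set (Option ↥(X \ C1))) := by
      simp only [Set.mem_compl_iff, Set.mem_singleton_iff]
      intro hh
      exact hst₀ (congrArg Subtype.val (Option.some_injective _ hh))
    obtain ⟨E, hE, hsE⟩ := hcov (some ⟨s, hs⟩) hsne
    obtain ⟨o, hoE⟩ := mem_other hsE
    cases o with
    | none =>
      -- E contains none hence E = E₀, so s = α'.1
      have hEE₀ : E = E₀ := by
        by_contra hh
        exact hdisj E hE E₀ hE₀ hh none (by rw [hoE]; exact Sym2.mem_mk_right _ _) hnE₀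
      have : (some ⟨s, hs⟩ : Option ↥(X \ C1)) ∈ E₀ := hEE₀ ▸ hsE
      rw [hoE₀] at this
      rcases Sym2.mem_iff.mp this with hh | hh
      · cases hh
      · have : s = α'.1 := congrArg Subtype.val (Option.some_injective _ hh) ▸ rfl
        refine ⟨s(α'.1, c), Set.mem_insert _ _, ?_⟩
        rw [← this]
        exact Sym2.mem_mk_left _ _
    | some β =>
      refine ⟨s(s, β.1), Set.mem_insert_of_mem _ ⟨⟨s, hs⟩, β, rfl, ?_⟩, Sym2.mem_mk_left _ _⟩
      rw [← hoE]
      exact hE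

end S9
namespace S9
open SimpleGraph Walk List
variable {V : Type*} {G : SimpleGraph V}

lemma val_eq_some_edge {S : Set V} {α β γ δ : ↥S}
    (h : s(α.1, β.1) = s(γ.1, δ.1)) :
    s((some α : Option ↥S), some β) = s((some γ : Option ↥S), some δ) := by
  rw [Sym2.eq_iff] at h ⊢
  rcases h with ⟨h1, h2⟩ | ⟨h1, h2⟩
  · exact Or.inl ⟨congrArg some (Subtype.ext h1), congrArg some (Subtype.ext h2)⟩
  · exact Or.inr ⟨congrArg some (Subtype.ext h1), congrArg some (Subtype.ext h2)⟩

lemma some_mem_val {S : Set V} {α β σ : ↥S}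
    (h : (some σ : Option ↥S) ∈ s((some α : Option ↥S), some β)) : σ.1 ∈ s(α.1, β.1) := by
  rcases Sym2.mem_iff.mp h with h | h
  · rw [Option.some_injective _ h]; exact Sym2.mem_mk_left _ _
  · rw [Option.some_injective _ h]; exact Sym2.mem_mk_right _ _

/-- Pushing a matching of `G` covering exactly `Y \ C1` into `G[Y]/C1`. -/
lemma push_none {Y C1 : Set V} (N : Set (Sym2 V)) (hNE : N ⊆ G.edgeSet)
    (hND : DisjointEdges N) (hNW : Within (Y \ C1) N) (hNC : Covers (Y \ C1) N) :
    HasPMOn (contractOn G Y C1) ({(none : Option ↥(Y \ C1))}ᶜ) := by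
  refine ⟨{E | ∃ α β : ↥(Y \ C1), E = s(some α, some β) ∧ s(α.1, β.1) ∈ N},
    ⟨?_, ?_⟩, ?_, ?_⟩
  · rintro E ⟨α, β, rfl, he⟩
    rw [SimpleGraph.mem_edgeSet]
    have := hNE he
    rw [SimpleGraph.mem_edgeSet] at this
    exact this
  · rintro E ⟨α, β, rfl, he⟩ F ⟨γ, δ, rfl, hf⟩ hne o hoE hoF
    cases o with
    | none => exact none_not_mem_ss hoE
    | some σ =>
      have h1 := some_mem_val hoE
      have h2 := some_mem_val hoF
      by_cases hval : s(α.1, β.1) = s(γ.1, δ.1)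
      · exact hne (val_eq_some_edge hval)
      · exact hND _ he _ hf hval σ.1 h1 h2
  · rintro E ⟨α, β, rfl, he⟩ o hoE
    simp only [Set.mem_compl_iff, Set.mem_singleton_iff]
    rcases Sym2.mem_iff.mp hoE with rfl | rfl <;> simp
  · intro o ho
    cases o with
    | none => simp at ho
    | some σ =>
      obtain ⟨e, heN, hσe⟩ := hNC σ.1 σ.2
      obtain ⟨t', ht'⟩ := mem_other hσe
      have ht'mem : t' ∈ Y \ C1 := hNW e heN t' (by rw [ht']; exact Sym2.mem_mk_right _ _)
      refine ⟨s(some σ, some ⟨t', ht'mem⟩), ⟨σ, ⟨t', ht'mem⟩, rfl, ?_⟩, Sym2.mem_mk_left _ _⟩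
      rw [← ht']
      exact heN

/-- Pushing a near-perfect matching of `G` (with one edge into `C1`) into `G[Y]/C1`,
exposing `some w₀`. -/
lemma push_some {Y C1 : Set V} {w₀ : ↥(Y \ C1)} (N : Set (Sym2 V)) (α c : V)
    (hα : α ∈ Y \ C1) (hcC1 : c ∈ C1) (hαw : α ≠ w₀.1) (hd : s(α, c) ∈ N)
    (hNE : N ⊆ G.edgeSet) (hND : DisjointEdges N)
    (hoth : ∀ e ∈ N, e ≠ s(α, c) → ∀ t : V, t ∈ e → t ∈ Y \ C1 ∧ t ≠ w₀.1)
    (hcov : ∀ t ∈ Y \ C1, t ≠ w₀.1 → ∃ e ∈ N, t ∈ e) :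
    HasPMOn (contractOn G Y C1) ({(some w₀ : Option ↥(Y \ C1))}ᶜ) := by
  have hcY : c ∉ Y \ C1 := fun hc' => hc'.2 hcC1
  have hadjαc : G.Adj α c := by
    have := hNE hd
    rw [SimpleGraph.mem_edgeSet] at this
    exact this
  refine ⟨insert s(some ⟨α, hα⟩, none)
      {E | ∃ γ δ : ↥(Y \ C1), E = s(some γ, some δ) ∧ s(γ.1, δ.1) ∈ N ∧ s(γ.1, δ.1) ≠ s(α, c)},
    ⟨?_, ?_⟩, ?_, ?_⟩
  · rintro E (rfl | ⟨γ, δ, rfl, he, -⟩)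
    · rw [SimpleGraph.mem_edgeSet]
      exact ⟨c, hcC1, hadjαc⟩
    · rw [SimpleGraph.mem_edgeSet]
      have := hNE he
      rw [SimpleGraph.mem_edgeSet] at this
      exact this
  · rintro E he F hf hne o hoE hoF
    rcases he with rfl | ⟨γ, δ, rfl, he, hed⟩
    · rcases hf with rfl | ⟨γ, δ, rfl, hf, hfd⟩
      · exact hne rfl
      · -- E designated, F some-some
        rcases Sym2.mem_iff.mp hoE with rfl | rfl
        · have h2 := some_mem_val hoF
          exact hND _ hf _ hd hfd α h2 (Sym2.mem_mk_left _ _)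
        · exact none_not_mem_ss hoF
    · rcases hf with rfl | ⟨γ', δ', rfl, hf, hfd⟩
      · rcases Sym2.mem_iff.mp hoF with rfl | rfl
        · have h2 := some_mem_val hoE
          exact hND _ he _ hd hed α h2 (Sym2.mem_mk_left _ _)
        · exact none_not_mem_ss hoE
      · cases o with
        | none => exact none_not_mem_ss hoE
        | some σ =>
          have h1 := some_mem_val hoE
          have h2 := some_mem_val hoF
          by_cases hval : s(γ.1, δ.1) = s(γ'.1, δ'.1)
          · exact hne (val_eq_some_edge hval)
          · exact hND _ he _ hf hval σ.1 h1 h2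
  · -- edges avoid `some w₀`
    rintro E he o hoE
    simp only [Set.mem_compl_iff, Set.mem_singleton_iff]
    rcases he with rfl | ⟨γ, δ, rfl, heN, hed⟩
    · rcases Sym2.mem_iff.mp hoE with rfl | rfl
      · intro hh
        exact hαw (congrArg Subtype.val (Option.some_injective _ hh))
      · simp
    · rcases Sym2.mem_iff.mp hoE with rfl | rfl
      · intro hh
        exact (hoth _ heN hed γ.1 (Sym2.mem_mk_left _ _)).2
          (congrArg Subtype.val (Option.some_injective _ hh))
      · intro hh
        exact (hoth _ heN hed δ.1 (Sym2.mem_mk_right _ _)).2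
          (congrArg Subtype.val (Option.some_injective _ hh))
  · -- coverage of all vertices except `some w₀`
    intro o ho
    cases o with
    | none => exact ⟨s(some ⟨α, hα⟩, none), Set.mem_insert _ _, Sym2.mem_mk_right _ _⟩
    | some σ =>
      have hσw : σ.1 ≠ w₀.1 := by
        intro hh
        simp only [Set.mem_compl_iff, Set.mem_singleton_iff] at ho
        exact ho (congrArg some (Subtype.ext hh))
      obtain ⟨e, heN, hσe⟩ := hcov σ.1 σ.2 hσw
      by_cases hed : e = s(α, c)
      · subst hed
        have hσα : σ.1 = α := by
          rcases Sym2.mem_iff.mp hσe with hh | hh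
          · exact hh
          · exact absurd (hh ▸ σ.2) hcY
        refine ⟨s(some ⟨α, hα⟩, none), Set.mem_insert _ _, ?_⟩
        have : σ = ⟨α, hα⟩ := Subtype.ext hσα
        rw [this]
        exact Sym2.mem_mk_left _ _
      · obtain ⟨t', ht'⟩ := mem_other hσe
        have ht'mem : t' ∈ Y \ C1 :=
          (hoth e heN hed t' (by rw [ht']; exact Sym2.mem_mk_right _ _)).1
        refine ⟨s(some σ, some ⟨t', ht'mem⟩),
          Set.mem_insert_of_mem _ ⟨σ, ⟨t', ht'mem⟩, rfl, ?_, ?_⟩, Sym2.mem_mk_left _ _⟩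
        · rw [← ht']; exact heN
        · rw [← ht']; exact hed

end S9

open S9

/-- Let `G` be factorizable with perfect matching `M`, `G1` a
factor-component, and `X` a critical-inducing set for `G1`. If there is an `M`-ear `P`
relative to `X`, and `I1, …, Is` are the factor-components containing internal vertices
of `P`, then `X ∪ V(I1) ∪ ⋯ ∪ V(Is)` is also a critical-inducing set for `G1`. -/
theorem statement_9 {V : Type*} [Fintype V] (G : SimpleGraph V) (hG : Factorizable G)
    (M : Set (Sym2 V)) (hM : IsPerfectMatchingSet G M)
    (C1 : Set V) (hC1 : IsFactorComponent G C1)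
    (X : Set V) (hX : CriticalInducing G C1 X)
    (u v : V) (p : G.Walk u v) (hp : IsMEar G M X p) :
    CriticalInducing G C1
      (X ∪ ⋃₀ {C : Set V | IsFactorComponent G C ∧ ∃ w ∈ p.support, w ∉ X ∧ w ∈ C}) := by
  classical
  obtain ⟨hSep, hC1X, hFC⟩ := hX
  obtain ⟨huX, hvX, hpc, x, y, hux, q, hyv, hpeq, hqsat, hqX⟩ := hp
  set 𝒞 : Set (Set V) := {C : Set V | IsFactorComponent G C ∧ ∃ w ∈ p.support, w ∉ X ∧ w ∈ C}
    with h𝒞def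
  set D : Set V := ⋃₀ 𝒞 with hDdef
  set Y : Set V := X ∪ D with hYdef
  have h𝒞comp : ∀ C ∈ 𝒞, IsFactorComponent G C := fun C hC => hC.1
  have hDX : ∀ t ∈ D, t ∉ X := by
    rintro t ⟨C, hC, htC⟩ htX
    obtain ⟨w', hw'p, hw'X, hw'C⟩ := hC.2
    rcases hSep C hC.1 with hsub | hdisj
    · exact hw'X (hsub hw'C)
    · exact (Set.disjoint_left.mp hdisj htC) htX
  have hDC1 : ∀ t ∈ D, t ∉ C1 := fun t ht hc => hDX t ht (hC1X hc)
  have hDYC1 : ∀ t ∈ D, t ∈ Y \ C1 := fun t ht => ⟨Or.inr ht, hDC1 t ht⟩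
  have hXC1YC1 : ∀ t ∈ X \ C1, t ∈ Y \ C1 := fun t ht => ⟨Or.inl ht.1, ht.2⟩
  have hqp : ∀ t ∈ q.support, t ∈ p.support := by
    intro t ht
    rw [hpeq, Walk.support_cons]
    refine List.mem_cons_of_mem _ ?_
    rw [Walk.support_concat]
    exact List.mem_append_left _ ht
  have hqD : ∀ t ∈ q.support, t ∈ D := by
    intro t ht
    refine ⟨((allowedSubgraph G).connectedComponentMk t).supp,
      ⟨⟨(allowedSubgraph G).connectedComponentMk t, rfl⟩, t, hqp t ht, hqX t ht, mem_own_supp t⟩,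
      mem_own_supp t⟩
  have hxD : x ∈ D := hqD x (Walk.start_mem_support q)
  have hyD : y ∈ D := hqD y (Walk.end_mem_support q)
  have hMD : MClosed M D := sUnion_supp_mclosed hM h𝒞comp
  have hRD_C : Covers D (restr D M) := restr_covers hM hMD
  have hRD_E : restr D M ⊆ G.edgeSet := fun e he => hM.1.1 he.1
  have hRD_Dj : DisjointEdges (restr D M) := (restr_mset hM.1 D).2
  have hRD_W : Within D (restr D M) := restr_within D M
  -- the key exposure property within D
  have GP : ∀ w ∈ D, ∃ N : Set (Sym2 V), Expo G D N w x ∨ Expo G D N w y := by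
    rintro w ⟨C, hC𝒞, hwC⟩
    obtain ⟨⟨cc, hcc⟩, w₀, hw₀p, hw₀X, hw₀C⟩ := hC𝒞
    have hw₀q : w₀ ∈ q.support := by
      rw [hpeq, Walk.support_cons] at hw₀p
      rcases List.mem_cons.mp hw₀p with rfl | hw₀p
      · exact absurd huX hw₀X
      · rw [Walk.support_concat] at hw₀p
        rcases List.mem_append.mp hw₀p with h | h
        · exact h
        · rw [List.mem_singleton] at h
          exact absurd (h ▸ hvX) hw₀X
    by_cases hwq : w ∈ q.support
    · obtain ⟨N, hor, -⟩ := gp_base hM.1 hRD_C q.length q rfl hqsat hqD w hwq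
      exact ⟨N, hor⟩
    · have hne : w ≠ w₀ := fun h => hwq (h ▸ hw₀q)
      have hcompw : (allowedSubgraph G).connectedComponentMk w = cc := by
        rw [← ConnectedComponent.mem_supp_iff, ← hcc]; exact hwC
      have hcompw₀ : (allowedSubgraph G).connectedComponentMk w₀ = cc := by
        rw [← ConnectedComponent.mem_supp_iff, ← hcc]; exact hw₀C
      have hreach : (allowedSubgraph G).Reachable w₀ w :=
        ConnectedComponent.exact (hcompw₀.trans hcompw.symm)
      obtain ⟨Wa⟩ := hreach
      obtain ⟨W, hWp, hWS, hWch, hWh⟩ := lp hM Wa.length Wa rfl hne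
      have hWD : ∀ t ∈ W.support, t ∈ D := by
        intro t ht
        have : (allowedSubgraph G).connectedComponentMk t = cc := (hWS t ht).trans hcompw
        refine ⟨C, ?_, ?_⟩
        · exact ⟨⟨cc, hcc⟩, w₀, hw₀p, hw₀X, hw₀C⟩
        · rw [hcc, ConnectedComponent.mem_supp_iff]; exact this
      obtain ⟨N, hor, -⟩ := gp_ind hM.1 hRD_C q hqsat hqD W.length W rfl hWp hWch hWh hWD hw₀q
      exact ⟨N, hor⟩
  refine ⟨?_, fun t ht => Or.inl (hC1X ht), ?_⟩
  · -- separating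
    intro C hC
    rcases hSep C hC with hsub | hdisj
    · exact Or.inl (fun t ht => Or.inl (hsub ht))
    · by_cases hC𝒞 : C ∈ 𝒞
      · exact Or.inl (fun t ht => Or.inr ⟨C, hC𝒞, ht⟩)
      · refine Or.inr (Set.disjoint_left.mpr ?_)
        rintro t htC (htX | ⟨C', hC', htC'⟩)
        · exact Set.disjoint_left.mp hdisj htC htX
        · obtain ⟨c, rfl⟩ := hC
          obtain ⟨c', rfl⟩ := hC'.1
          have : c = c' := by
            rw [ConnectedComponent.mem_supp_iff] at htC htC'
            rw [← htC, ← htC']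
          rw [this] at hC𝒞
          exact hC𝒞 hC'
  · -- factor-criticality of the contraction
    intro a
    -- the assembly of an exposure in D with a cross edge and the X-side matchings
    have assemble : ∀ (x' u' : V), x' ∈ D → u' ∈ X → G.Adj u' x' →
        ∀ (w₀ : ↥(Y \ C1)), w₀.1 ∈ D →
        ∀ N_D : Set (Sym2 V), Expo G D N_D w₀.1 x' →
        HasPMOn (contractOn G Y C1) ({(some w₀ : Option ↥(Y \ C1))}ᶜ) := by
      intro x' u' hx'D hu'X hadj w₀ hwD N_D hND
      obtain ⟨hNDE, hNDD, hNDW, hNDC, hwx'⟩ := hND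
      have hx'X : x' ∉ X := hDX x' hx'D
      have hu'D : u' ∉ D := fun h => hDX u' h hu'X
      have hwX : w₀.1 ∉ X := hDX w₀.1 hwD
      by_cases hu'C1 : u' ∈ C1
      · -- the cross edge u'–x' covers the contracted vertex
        obtain ⟨B, hBE, hBD, hBW, hBC⟩ := pull_none (hFC none)
        refine push_some (N := B ∪ insert s(x', u') N_D) x' u' (hDYC1 x' hx'D) hu'C1
          (fun h => hwx' h.symm) (Or.inr (Set.mem_insert _ _)) ?_ ?_ ?_ ?_
        · rintro e (he | he)
          · exact hBE he
          · rcases he with rfl | he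
            · rw [SimpleGraph.mem_edgeSet]; exact hadj.symm
            · exact hNDE he
        · -- disjointness
          rintro e he f hf hne t hte htf
          have hBX : ∀ g ∈ B, ∀ s : V, s ∈ g → s ∈ X ∧ s ∉ C1 ∧ s ∈ X \ C1 := by
            intro g hg s hs
            have := hBW g hg s hs
            exact ⟨this.1, this.2, this⟩
          have hDXe : ∀ g ∈ N_D, ∀ s : V, s ∈ g → s ∈ D ∧ s ≠ w₀.1 ∧ s ≠ x' := by
            intro g hg s hs
            obtain ⟨h1, h2⟩ := hNDW g hg s hs
            refine ⟨h1, fun hh => h2 (Or.inl hh), fun hh => h2 (Or.inr hh)⟩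
          rcases he with he | he
          · rcases hf with hf | hf
            · exact hBD e he f hf hne t hte htf
            · rcases hf with rfl | hf
              · rcases Sym2.mem_iff.mp htf with rfl | rfl
                · exact hx'X (hBX e he t hte).1
                · exact (hBX e he t hte).2.1 hu'C1
              · exact hDX t (hDXe f hf t htf).1 (hBX e he t hte).1
          · rcases he with rfl | he
            · rcases hf with hf | hf
              · rcases Sym2.mem_iff.mp hte with rfl | rfl
                · exact hx'X (hBX f hf t htf).1
                · exact (hBX f hf t htf).2.1 hu'C1
              · rcases hf with rfl | hf
                · exact hne rfl
                · rcases Sym2.mem_iff.mp hte with rfl | rfl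
                  · exact (hDXe f hf t htf).2.2 rfl
                  · exact hu'D (hDXe f hf t htf).1
            · rcases hf with hf | hf
              · exact hDX t (hDXe e he t hte).1 (hBX f hf t htf).1
              · rcases hf with rfl | hf
                · rcases Sym2.mem_iff.mp htf with rfl | rfl
                  · exact (hDXe e he t hte).2.2 rfl
                  · exact hu'D (hDXe e he t hte).1
                · exact hNDD e he f hf hne t hte htf
        · -- other edges in (Y \ C1) \ {w₀}
          rintro e he hne t hte
          rcases he with he | he
          · refine ⟨hXC1YC1 t (hBW e he t hte), fun hh => hwX (hh ▸ (hBW e he t hte).1)⟩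
          · rcases he with rfl | he
            · exact absurd rfl hne
            · obtain ⟨h1, h2⟩ := hNDW e he t hte
              exact ⟨hDYC1 t h1, fun hh => h2 (Or.inl hh)⟩
        · -- coverage
          intro t htY htw
          rcases htY.1 with htX | htD
          · obtain ⟨e, heB, hte⟩ := hBC t ⟨htX, htY.2⟩
            exact ⟨e, Or.inl heB, hte⟩
          · by_cases htx' : t = x'
            · exact ⟨s(x', u'), Or.inr (Set.mem_insert _ _), htx' ▸ Sym2.mem_mk_left _ _⟩
            · obtain ⟨e, heD, hte⟩ := hNDC t ⟨htD, by
                rintro (hh | hh)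
                · exact htw hh
                · exact htx' hh⟩
              exact ⟨e, Or.inr (Set.mem_insert_of_mem _ heD), hte⟩
      · -- u' is in X \ C1 : expose it on the X side
        obtain ⟨B, α, c, hαX, hcC1, hαu, hdB, hBE, hBD, hBoth, hBcov⟩ :=
          pull_some (t₀ := ⟨u', hu'X, hu'C1⟩) (hFC (some ⟨u', hu'X, hu'C1⟩))
        have hcX : c ∈ X := hC1X hcC1
        have hcD : c ∉ D := fun h => hDX c h hcX
        have hBall : ∀ g ∈ B, ∀ s : V, s ∈ g → s ∈ X := by
          intro g hg s hs
          by_cases hgd : g = s(α, c)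
          · subst hgd
            rcases Sym2.mem_iff.mp hs with rfl | rfl
            · exact hαX.1
            · exact hcX
          · exact (hBoth g hg hgd s hs).1.1
        have hBu' : ∀ g ∈ B, u' ∉ g := by
          intro g hg hu'g
          by_cases hgd : g = s(α, c)
          · subst hgd
            rcases Sym2.mem_iff.mp hu'g with rfl | rfl
            · exact hαu rfl
            · exact hu'C1 hcC1
          · exact (hBoth g hg hgd u' hu'g).2 rfl
        have hDXe : ∀ g ∈ N_D, ∀ s : V, s ∈ g → s ∈ D ∧ s ≠ w₀.1 ∧ s ≠ x' := by
          intro g hg s hs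
          obtain ⟨h1, h2⟩ := hNDW g hg s hs
          refine ⟨h1, fun hh => h2 (Or.inl hh), fun hh => h2 (Or.inr hh)⟩
        refine push_some (N := B ∪ insert s(u', x') N_D) α c
          (hXC1YC1 α hαX) hcC1 (fun hh => hDX α (hh ▸ hwD) hαX.1)
          (Or.inl hdB) ?_ ?_ ?_ ?_
        · rintro e (he | he)
          · exact hBE he
          · rcases he with rfl | he
            · rw [SimpleGraph.mem_edgeSet]; exact hadj
            · exact hNDE he
        · rintro e he f hf hne t hte htf
          rcases he with he | he
          · rcases hf with hf | hf
            · exact hBD e he f hf hne t hte htf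
            · rcases hf with rfl | hf
              · rcases Sym2.mem_iff.mp htf with rfl | rfl
                · exact hBu' e he hte
                · exact hx'X (hBall e he t hte)
              · exact hDX t (hDXe f hf t htf).1 (hBall e he t hte)
          · rcases he with rfl | he
            · rcases hf with hf | hf
              · rcases Sym2.mem_iff.mp hte with rfl | rfl
                · exact hBu' f hf htf
                · exact hx'X (hBall f hf t htf)
              · rcases hf with rfl | hf
                · exact hne rfl
                · rcases Sym2.mem_iff.mp hte with rfl | rfl
                  · exact hu'D (hDXe f hf t htf).1
                  · exact (hDXe f hf t htf).2.2 rfl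
            · rcases hf with hf | hf
              · exact hDX t (hDXe e he t hte).1 (hBall f hf t htf)
              · rcases hf with rfl | hf
                · rcases Sym2.mem_iff.mp htf with rfl | rfl
                  · exact hu'D (hDXe e he t hte).1
                  · exact (hDXe e he t hte).2.2 rfl
                · exact hNDD e he f hf hne t hte htf
        · rintro e he hne t hte
          rcases he with he | he
          · by_cases hed : e = s(α, c)
            · exact absurd hed hne
            · obtain ⟨h1, h2⟩ := hBoth e he hed t hte
              exact ⟨hXC1YC1 t h1, fun hh => hwX (hh ▸ h1.1)⟩
          · rcases he with rfl | he
            · rcases Sym2.mem_iff.mp hte with rfl | rfl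
              · exact ⟨hXC1YC1 _ ⟨hu'X, hu'C1⟩, fun hh => hwX (hh ▸ hu'X)⟩
              · exact ⟨hDYC1 t hx'D, fun hh => hwx' hh.symm⟩
            · obtain ⟨h1, h2⟩ := hNDW e he t hte
              exact ⟨hDYC1 t h1, fun hh => h2 (Or.inl hh)⟩
        · intro t htY htw
          rcases htY.1 with htX | htD
          · by_cases htu : t = u'
            · exact ⟨s(u', x'), Or.inr (Set.mem_insert _ _), htu ▸ Sym2.mem_mk_left _ _⟩
            · obtain ⟨e, heB, hte⟩ := hBcov t ⟨htX, htY.2⟩ htu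
              exact ⟨e, Or.inl heB, hte⟩
          · by_cases htx' : t = x'
            · exact ⟨s(u', x'), Or.inr (Set.mem_insert _ _), htx' ▸ Sym2.mem_mk_right _ _⟩
            · obtain ⟨e, heD, hte⟩ := hNDC t ⟨htD, by
                rintro (hh | hh)
                · exact htw hh
                · exact htx' hh⟩
              exact ⟨e, Or.inr (Set.mem_insert_of_mem _ heD), hte⟩
    cases a with
    | none =>
      obtain ⟨B, hBE, hBD, hBW, hBC⟩ := pull_none (hFC none)
      refine push_none (B ∪ restr D M) ?_ ?_ ?_ ?_
      · rintro e (he | he)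
        · exact hBE he
        · exact hRD_E he
      · rintro e he f hf hne t hte htf
        rcases he with he | he
        · rcases hf with hf | hf
          · exact hBD e he f hf hne t hte htf
          · exact hDX t (hRD_W f hf t htf) (hBW e he t hte).1
        · rcases hf with hf | hf
          · exact hDX t (hRD_W e he t hte) (hBW f hf t htf).1
          · exact hRD_Dj e he f hf hne t hte htf
      · rintro e he t hte
        rcases he with he | he
        · exact hXC1YC1 t (hBW e he t hte)
        · exact hDYC1 t (hRD_W e he t hte)
      · intro t htY
        rcases htY.1 with htX | htD
        · obtain ⟨e, heB, hte⟩ := hBC t ⟨htX, htY.2⟩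
          exact ⟨e, Or.inl heB, hte⟩
        · obtain ⟨e, heD, hte⟩ := hRD_C t htD
          exact ⟨e, Or.inr heD, hte⟩
    | some w₀ =>
      rcases w₀.2.1 with hwX | hwD
      · -- w₀ is on the X side
        obtain ⟨B, α, c, hαX, hcC1, hαw, hdB, hBE, hBD, hBoth, hBcov⟩ :=
          pull_some (t₀ := ⟨w₀.1, hwX, w₀.2.2⟩) (hFC (some ⟨w₀.1, hwX, w₀.2.2⟩))
        have hcX : c ∈ X := hC1X hcC1
        have hBall : ∀ g ∈ B, ∀ s : V, s ∈ g → s ∈ X := by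
          intro g hg s hs
          by_cases hgd : g = s(α, c)
          · subst hgd
            rcases Sym2.mem_iff.mp hs with rfl | rfl
            · exact hαX.1
            · exact hcX
          · exact (hBoth g hg hgd s hs).1.1
        refine push_some (N := B ∪ restr D M) α c (hXC1YC1 α hαX) hcC1 hαw
          (Or.inl hdB) ?_ ?_ ?_ ?_
        · rintro e (he | he)
          · exact hBE he
          · exact hRD_E he
        · rintro e he f hf hne t hte htf
          rcases he with he | he
          · rcases hf with hf | hf
            · exact hBD e he f hf hne t hte htf
            · exact hDX t (hRD_W f hf t htf) (hBall e he t hte)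
          · rcases hf with hf | hf
            · exact hDX t (hRD_W e he t hte) (hBall f hf t htf)
            · exact hRD_Dj e he f hf hne t hte htf
        · rintro e he hne t hte
          rcases he with he | he
          · obtain ⟨h1, h2⟩ := hBoth e he hne t hte
            exact ⟨hXC1YC1 t h1, h2⟩
          · have := hRD_W e he t hte
            exact ⟨hDYC1 t this, fun hh => hDX t this (hh ▸ hwX)⟩
        · intro t htY htw
          rcases htY.1 with htX | htD
          · obtain ⟨e, heB, hte⟩ := hBcov t ⟨htX, htY.2⟩ htw
            exact ⟨e, Or.inl heB, hte⟩
          · obtain ⟨e, heD, hte⟩ := hRD_C t htD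
            exact ⟨e, Or.inr heD, hte⟩
      · -- w₀ is in D : use the exposure property
        obtain ⟨N_D, hor⟩ := GP w₀.1 hwD
        rcases hor with hND | hND
        · exact assemble x u hxD huX hux w₀ hwD N_D hND
        · exact assemble y v hyD hvX (hyv.symm) w₀ hwD N_D hND
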